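/- arXiv:2408.01352 — 4 statements merged into one kernel-verified Lean document; each statement's English description precedes it below -/
import Mathlib

section
/- Let a ≥ 1 be an integer, R > 0, and ζ ∈ tD^{a+2}_R. For r > 0 define ζ_r(t) := min(t^{a+2}/r^{a+2}, 1) · ζ(t) for t > 0. Then ζ_r extends continuously by the value 0 at t = 0 to a continuous function on [0,∞) with support in [0,R], ζ_r ∈ tD^{a+2}_R, ‖ζ − ζ_r‖ ≤ sup_{0 < s ≤ r} s^{a+2}|ζ(s)|, and ‖ζ − ζ_r‖ → 0 as r → 0+. In particular, the set of elements of tD^{a+2}_R that extend to continuous compactly supported functions on [0,∞) is dense in tD^{a+2}_R. -/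
/-!
Statement 4: truncations `ζ_r(t) = min(t^{a+2}/r^{a+2}, 1) ζ(t)` of an element of
`tD^{a+2}_R` extend continuously by `0` to `[0,∞)`, belong to `tD^{a+2}_R`,
approximate `ζ` in norm, and hence functions extending continuously to `[0,∞)`
are dense in `tD^{a+2}_R`.
-/

noncomputable section

open Filter Topology

/-- `ζ` (encoded as a function on `ℝ` vanishing on `(-∞,0]`) is an element of
`tD^{a+2}_R`. -/
def MemTD (a : ℕ) (R : ℝ) (ζ : ℝ → ℝ) : Prop :=
  ContinuousOn ζ (Set.Ioi 0) ∧ (∀ t ≤ (0 : ℝ), ζ t = 0) ∧ (∀ t : ℝ, R < t → ζ t = 0) ∧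
  Tendsto (fun t : ℝ => t ^ (a + 2) * ζ t) (nhdsWithin 0 (Set.Ioi 0)) (𝓝 0)

/-- The truncation `ζ_r(t) := min(t^{a+2}/r^{a+2}, 1) · ζ(t)`. -/
def truncTD (a : ℕ) (ζ : ℝ → ℝ) (r : ℝ) : ℝ → ℝ :=
  fun t => min (t ^ (a + 2) / r ^ (a + 2)) 1 * ζ t

namespace Stmt4Aux

variable {a : ℕ} {R : ℝ} {ζ : ℝ → ℝ} {r t : ℝ}

lemma min_mem (hr : 0 < r) (ht : 0 ≤ t) :
    0 ≤ min (t ^ (a + 2) / r ^ (a + 2)) 1 ∧ min (t ^ (a + 2) / r ^ (a + 2)) 1 ≤ 1 :=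
  ⟨le_min (div_nonneg (pow_nonneg ht _) (pow_nonneg hr.le _)) zero_le_one, min_le_right _ _⟩

lemma trunc_eq_of_le (hr : 0 < r) (h : r ≤ t) : truncTD a ζ r t = ζ t := by
  unfold truncTD
  rw [min_eq_right, one_mul]
  exact (one_le_div (pow_pos hr _)).2 (pow_le_pow_left₀ hr.le h _)

lemma sub_trunc (a : ℕ) (ζ : ℝ → ℝ) (r t : ℝ) :
    ζ t - truncTD a ζ r t = (1 - min (t ^ (a + 2) / r ^ (a + 2)) 1) * ζ t := by
  unfold truncTD; ring

/-- pointwise key bound for `0 < t ≤ r`. -/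
lemma key_bound (hr : 0 < r) (ht : 0 ≤ t) :
    t ^ (a + 2) * |ζ t - truncTD a ζ r t| ≤ t ^ (a + 2) * |ζ t| := by
  rw [sub_trunc, abs_mul]
  have hm := min_mem (a := a) hr ht
  have h1 : |1 - min (t ^ (a + 2) / r ^ (a + 2)) 1| ≤ 1 := by
    rw [abs_of_nonneg (by linarith [hm.2])]; linarith [hm.1]
  calc t ^ (a + 2) * (|1 - min (t ^ (a + 2) / r ^ (a + 2)) 1| * |ζ t|)
      ≤ t ^ (a + 2) * (1 * |ζ t|) := by
        apply mul_le_mul_of_nonneg_left _ (pow_nonneg ht _)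
        exact mul_le_mul_of_nonneg_right h1 (abs_nonneg _)
    _ = t ^ (a + 2) * |ζ t| := by ring

lemma g_contOn (hζ : MemTD a R ζ) :
    ContinuousOn (fun t : ℝ => t ^ (a + 2) * ζ t) (Set.Ici 0) := by
  intro t ht
  rcases eq_or_lt_of_le (Set.mem_Ici.1 ht) with h0 | h0
  · subst h0
    have hv : (0 : ℝ) ^ (a + 2) * ζ 0 = 0 := by
      rw [hζ.2.1 0 le_rfl, mul_zero]
    unfold ContinuousWithinAt
    show Tendsto (fun t : ℝ => t ^ (a + 2) * ζ t) (𝓝[Set.Ici 0] 0) (𝓝 ((0:ℝ) ^ (a + 2) * ζ 0))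
    rw [hv]
    have hsplit : 𝓝[Set.Ici (0:ℝ)] 0 = 𝓝[Set.Ioi 0] 0 ⊔ 𝓝[{0}] 0 := by
      rw [← nhdsWithin_union, Set.Ioi_union_left]
    rw [hsplit, tendsto_sup]
    refine ⟨hζ.2.2.2, ?_⟩
    rw [nhdsWithin_singleton]
    rw [tendsto_pure_left]
    intro s hs
    simpa [hv] using mem_of_mem_nhds hs
  · have hζat : ContinuousAt ζ t :=
      (hζ.1 t h0).continuousAt (Ioi_mem_nhds h0)
    exact ((continuousAt_pow _ _).mul hζat).continuousWithinAt

lemma trunc_tendsto (hζ : MemTD a R ζ) (hr : 0 < r) :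
    Tendsto (truncTD a ζ r) (𝓝[>] (0:ℝ)) (𝓝 0) := by
  have h1 : Tendsto (fun t : ℝ => (t ^ (a + 2) * ζ t) / r ^ (a + 2)) (𝓝[>] (0:ℝ)) (𝓝 0) := by
    simpa using (hζ.2.2.2).div_const (r ^ (a + 2))
  apply h1.congr'
  filter_upwards [Ioo_mem_nhdsGT_of_mem (Set.left_mem_Ico.2 hr)] with t ht
  unfold truncTD
  rw [min_eq_left, div_mul_eq_mul_div]
  exact div_le_one_of_le₀ (pow_le_pow_left₀ ht.1.le ht.2.le _) (pow_nonneg hr.le _)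

lemma trunc_contOn (hζ : MemTD a R ζ) (hr : 0 < r) :
    ContinuousOn (truncTD a ζ r) (Set.Ioi 0) := by
  intro t ht
  have hζat : ContinuousAt ζ t := (hζ.1 t ht).continuousAt (Ioi_mem_nhds ht)
  have h1 : Continuous (fun x : ℝ => min (x ^ (a + 2) / r ^ (a + 2)) 1) :=
    ((continuous_pow _).div_const _).min continuous_const
  exact ContinuousAt.continuousWithinAt (h1.continuousAt.mul hζat)

lemma trunc_zero_le (hζ : MemTD a R ζ) (h : t ≤ 0) : truncTD a ζ r t = 0 := by
  unfold truncTD; rw [hζ.2.1 t h, mul_zero]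

lemma trunc_supp (hζ : MemTD a R ζ) (h : R < t) : truncTD a ζ r t = 0 := by
  unfold truncTD; rw [hζ.2.2.1 t h, mul_zero]

lemma trunc_contOn_Ici (hζ : MemTD a R ζ) (hr : 0 < r) :
    ContinuousOn (truncTD a ζ r) (Set.Ici 0) := by
  intro t ht
  rcases eq_or_lt_of_le (Set.mem_Ici.1 ht) with h0 | h0
  · subst h0
    have hv : truncTD a ζ r 0 = 0 := trunc_zero_le hζ le_rfl
    unfold ContinuousWithinAt
    show Tendsto (truncTD a ζ r) (𝓝[Set.Ici 0] 0) (𝓝 (truncTD a ζ r 0))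
    rw [hv]
    have hsplit : 𝓝[Set.Ici (0:ℝ)] 0 = 𝓝[Set.Ioi 0] 0 ⊔ 𝓝[{0}] 0 := by
      rw [← nhdsWithin_union, Set.Ioi_union_left]
    rw [hsplit, tendsto_sup]
    refine ⟨trunc_tendsto hζ hr, ?_⟩
    rw [nhdsWithin_singleton, tendsto_pure_left]
    intro s hs
    simpa [hv] using mem_of_mem_nhds hs
  · exact ((trunc_contOn hζ hr t h0).continuousAt (Ioi_mem_nhds h0)).continuousWithinAt

lemma trunc_mem (hζ : MemTD a R ζ) (hr : 0 < r) : MemTD a R (truncTD a ζ r) := by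
  refine ⟨trunc_contOn hζ hr, fun t ht => trunc_zero_le hζ ht,
    fun t ht => trunc_supp hζ ht, ?_⟩
  apply squeeze_zero_norm' (a := fun t : ℝ => |t ^ (a + 2) * ζ t|)
  · filter_upwards [self_mem_nhdsWithin] with t (ht : 0 < t)
    have hm := min_mem (a := a) hr ht.le
    unfold truncTD
    rw [Real.norm_eq_abs]
    calc |t ^ (a + 2) * (min (t ^ (a + 2) / r ^ (a + 2)) 1 * ζ t)|
        = min (t ^ (a + 2) / r ^ (a + 2)) 1 * |t ^ (a + 2) * ζ t| := by
          rw [abs_mul, abs_mul, abs_of_nonneg hm.1, abs_mul]; ring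
      _ ≤ 1 * |t ^ (a + 2) * ζ t| := mul_le_mul_of_nonneg_right hm.2 (abs_nonneg _)
      _ = |t ^ (a + 2) * ζ t| := one_mul _
  · simpa using (hζ.2.2.2).abs

lemma abs_pow_mul (ht : 0 ≤ t) : t ^ (a + 2) * |ζ t| = |t ^ (a + 2) * ζ t| := by
  rw [abs_mul, abs_pow, abs_of_nonneg ht]

lemma bddAbove_Ioc (hζ : MemTD a R ζ) (hr : 0 < r) :
    BddAbove ((fun s : ℝ => s ^ (a + 2) * |ζ s|) '' Set.Ioc 0 r) := by
  have hc : ContinuousOn (fun t : ℝ => |t ^ (a + 2) * ζ t|) (Set.Icc 0 r) :=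
    ((g_contOn hζ).mono (Set.Icc_subset_Ici_self)).abs
  have hb : BddAbove ((fun t : ℝ => |t ^ (a + 2) * ζ t|) '' Set.Icc 0 r) :=
    (isCompact_Icc.image_of_continuousOn hc).bddAbove
  refine hb.mono ?_
  rintro x ⟨s, hs, rfl⟩
  exact ⟨s, Set.Ioc_subset_Icc_self hs, (abs_pow_mul hs.1.le).symm⟩

end Stmt4Aux

open Stmt4Aux

/-- For `ζ ∈ tD^{a+2}_R` and `r > 0`, the truncation `ζ_r` extends
continuously by `0` at `t = 0` to a continuous function on `[0,∞)` supported in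
`[0,R]`, belongs to `tD^{a+2}_R`, satisfies
`‖ζ - ζ_r‖ ≤ sup_{0<s≤r} s^{a+2}|ζ(s)|`, and `‖ζ - ζ_r‖ → 0` as `r → 0⁺`.
In particular the elements of `tD^{a+2}_R` extending continuously to `[0,∞)` are
dense. -/
theorem stmt4 (a : ℕ) (ha : 1 ≤ a) (R : ℝ) (hR : 0 < R) (ζ : ℝ → ℝ)
    (hζ : MemTD a R ζ) :
    (∀ r : ℝ, 0 < r →
      ContinuousOn (truncTD a ζ r) (Set.Ici 0) ∧ truncTD a ζ r 0 = 0 ∧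
      (∀ t : ℝ, R < t → truncTD a ζ r t = 0) ∧
      MemTD a R (truncTD a ζ r) ∧
      (∀ t : ℝ, 0 < t → t ^ (a + 2) * |ζ t - truncTD a ζ r t| ≤
        sSup ((fun s : ℝ => s ^ (a + 2) * |ζ s|) '' Set.Ioc 0 r))) ∧
    Tendsto (fun r : ℝ => sSup ((fun t : ℝ => t ^ (a + 2) * |ζ t - truncTD a ζ r t|) ''
        Set.Ioi 0)) (nhdsWithin 0 (Set.Ioi 0)) (𝓝 0) ∧
    (∀ ε : ℝ, 0 < ε → ∃ ξ : ℝ → ℝ, MemTD a R ξ ∧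
      (∃ c : ℝ, Tendsto ξ (nhdsWithin 0 (Set.Ioi 0)) (𝓝 c)) ∧
      ∀ t : ℝ, 0 < t → t ^ (a + 2) * |ζ t - ξ t| ≤ ε) := by
  have hgδ : ∀ ε : ℝ, 0 < ε → ∃ δ > (0:ℝ), ∀ t : ℝ, 0 < t → t < δ →
      t ^ (a + 2) * |ζ t| < ε := by
    intro ε hε
    obtain ⟨δ, hδ, hd⟩ := Metric.tendsto_nhdsWithin_nhds.1 hζ.2.2.2 ε hε
    refine ⟨δ, hδ, fun t ht htδ => ?_⟩
    have := hd (Set.mem_Ioi.2 ht) (by rwa [Real.dist_eq, sub_zero, abs_of_pos ht])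
    rw [Real.dist_eq, sub_zero] at this
    rw [abs_pow_mul ht.le]
    exact this
  have key : ∀ r : ℝ, 0 < r →
      ContinuousOn (truncTD a ζ r) (Set.Ici 0) ∧ truncTD a ζ r 0 = 0 ∧
      (∀ t : ℝ, R < t → truncTD a ζ r t = 0) ∧
      MemTD a R (truncTD a ζ r) ∧
      (∀ t : ℝ, 0 < t → t ^ (a + 2) * |ζ t - truncTD a ζ r t| ≤
        sSup ((fun s : ℝ => s ^ (a + 2) * |ζ s|) '' Set.Ioc 0 r)) := by
    intro r hr
    refine ⟨trunc_contOn_Ici hζ hr, trunc_zero_le hζ le_rfl,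
      fun t ht => trunc_supp hζ ht, trunc_mem hζ hr, fun t ht => ?_⟩
    have hbdd := bddAbove_Ioc hζ hr
    rcases le_or_gt t r with htr | htr
    · refine le_trans (key_bound hr ht.le) ?_
      exact le_csSup hbdd ⟨t, ⟨ht, htr⟩, rfl⟩
    · rw [trunc_eq_of_le hr htr.le, sub_self, abs_zero, mul_zero]
      have : (0:ℝ) ≤ r ^ (a + 2) * |ζ r| :=
        mul_nonneg (pow_nonneg hr.le _) (abs_nonneg _)
      exact le_trans this (le_csSup hbdd ⟨r, ⟨hr, le_rfl⟩, rfl⟩)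
  refine ⟨key, ?_, ?_⟩
  · rw [Metric.tendsto_nhdsWithin_nhds]
    intro ε hε
    obtain ⟨δ, hδ, hd⟩ := hgδ (ε / 2) (by linarith)
    refine ⟨δ, hδ, fun r hr hrδ => ?_⟩
    rw [Set.mem_Ioi] at hr
    rw [Real.dist_eq, sub_zero, abs_of_pos hr] at hrδ
    set B := (fun t : ℝ => t ^ (a + 2) * |ζ t - truncTD a ζ r t|) '' Set.Ioi 0 with hB
    have hub : ∀ x ∈ B, x ≤ ε / 2 := by
      rintro x ⟨t, ht, rfl⟩
      rw [Set.mem_Ioi] at ht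
      show t ^ (a + 2) * |ζ t - truncTD a ζ r t| ≤ ε / 2
      rcases le_or_gt t r with htr | htr
      · exact le_trans (key_bound hr ht.le) (hd t ht (lt_of_le_of_lt htr hrδ)).le
      · rw [trunc_eq_of_le hr htr.le, sub_self, abs_zero, mul_zero]; linarith
    have hne : B.Nonempty := ⟨_, ⟨R + 1, Set.mem_Ioi.2 (by linarith), rfl⟩⟩
    have h0B : (0:ℝ) ∈ B := by
      refine ⟨R + 1, Set.mem_Ioi.2 (by linarith), ?_⟩
      show (R + 1) ^ (a + 2) * |ζ (R + 1) - truncTD a ζ r (R + 1)| = 0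
      rw [hζ.2.2.1 _ (by linarith), trunc_supp hζ (by linarith), sub_self, abs_zero, mul_zero]
    have hle : sSup B ≤ ε / 2 := csSup_le hne hub
    have hge : (0:ℝ) ≤ sSup B := le_csSup ⟨ε / 2, hub⟩ h0B
    rw [Real.dist_eq, sub_zero, abs_of_nonneg hge]
    linarith
  · intro ε hε
    obtain ⟨δ, hδ, hd⟩ := hgδ (ε / 2) (by linarith)
    refine ⟨truncTD a ζ (δ / 2), trunc_mem hζ (by linarith), ⟨0, trunc_tendsto hζ (by linarith)⟩,
      fun t ht => ?_⟩
    rcases le_or_gt t (δ / 2) with htr | htr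
    · refine le_trans (key_bound (by linarith) ht.le) ?_
      have := hd t ht (by linarith)
      linarith
    · rw [trunc_eq_of_le (by linarith) htr.le, sub_self, abs_zero, mul_zero]
      linarith
end
end

section
/- Let a ≥ 1 be an integer and R > 0. For every ζ ∈ D^a_R, the function R^a(ζ) extends continuously to [0,∞) (with value at 0 equal to a·lim_{t→0+} ∫_t^∞ ζ(r) r^{a−1} dr) and this extension lies in C_{c,R}([0,∞)). The resulting map R^a : D^a_R → C_{c,R}([0,∞)) is a linear bijection whose inverse is given by (R^a)^{−1}(φ)(t) = φ(t) t^{−a} − a ∫_t^∞ φ(s) s^{−a−1} ds for t > 0, and both R^a and its inverse are continuous: there exist constants c₁, c₂ > 0 (depending on a and R) such that sup_{t≥0} |R^a(ζ)(t)| ≤ c₁ ‖ζ‖_{D^a} for all ζ ∈ D^a_R and ‖(R^a)^{−1}(φ)‖_{D^a} ≤ c₂ sup_{t≥0} |φ(t)| for all φ ∈ C_{c,R}([0,∞)). -/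
/-!
Statement 5: the transform `R^a(ζ)(t) = ζ(t) t^a + a ∫_t^∞ ζ(s) s^{a-1} ds` is a
linear topological isomorphism from `D^a_R` onto `C_{c,R}([0,∞))`, with inverse
`(R^a)⁻¹(φ)(t) = φ(t) t^{-a} - a ∫_t^∞ φ(s) s^{-a-1} ds`.
-/

noncomputable section

open Filter Topology

/-- `ζ` (encoded as a function on `ℝ` vanishing on `(-∞,0]`) belongs to `D^a_R`:
continuous on `(0,∞)`, supported in `(0,R]`, `t^a ζ(t) → 0` as `t → 0⁺`, and
`∫_t^∞ ζ(r) r^{a-1} dr` has a finite limit as `t → 0⁺`. -/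
def MemD (a : ℕ) (R : ℝ) (ζ : ℝ → ℝ) : Prop :=
  ContinuousOn ζ (Set.Ioi 0) ∧ (∀ t ≤ (0 : ℝ), ζ t = 0) ∧ (∀ t : ℝ, R < t → ζ t = 0) ∧
  Tendsto (fun t : ℝ => t ^ a * ζ t) (nhdsWithin 0 (Set.Ioi 0)) (𝓝 0) ∧
  ∃ L : ℝ, Tendsto (fun t : ℝ => ∫ r in Set.Ioi t, ζ r * r ^ (a - 1))
    (nhdsWithin 0 (Set.Ioi 0)) (𝓝 L)

/-- `φ` (encoded as a function on `ℝ` vanishing on `(-∞,0)`) belongs to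
`C_{c,R}([0,∞))`: continuous on `[0,∞)` with support contained in `[0,R]`. -/
def MemCc (R : ℝ) (φ : ℝ → ℝ) : Prop :=
  ContinuousOn φ (Set.Ici 0) ∧ (∀ t : ℝ, t < 0 → φ t = 0) ∧ (∀ t : ℝ, R < t → φ t = 0)

/-- The transform `R^a`. -/
def Ra (a : ℕ) (ζ : ℝ → ℝ) : ℝ → ℝ :=
  fun t => ζ t * t ^ a + a * ∫ s in Set.Ioi t, ζ s * s ^ (a - 1)

/-- The inverse transform `(R^a)⁻¹(φ)(t) = φ(t) t^{-a} - a ∫_t^∞ φ(s) s^{-a-1} ds`. -/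
def RaInv (a : ℕ) (φ : ℝ → ℝ) : ℝ → ℝ :=
  fun t => if 0 < t then φ t / t ^ a - a * ∫ s in Set.Ioi t, φ s / s ^ (a + 1) else 0

/-- The norm `‖ζ‖_{D^a} = sup_{t>0} t^a |ζ(t)| + sup_{t>0} |∫_t^∞ ζ(r) r^{a-1} dr|`. -/
def DNorm (a : ℕ) (ζ : ℝ → ℝ) : ℝ :=
  sSup ((fun t : ℝ => t ^ a * |ζ t|) '' Set.Ioi 0) +
  sSup ((fun t : ℝ => |∫ r in Set.Ioi t, ζ r * r ^ (a - 1)|) '' Set.Ioi 0)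

open MeasureTheory

lemma helper_integrableOn {f : ℝ → ℝ} {R : ℝ}
    (hc : ContinuousOn f (Set.Ioi 0)) (h0 : ∀ t, R < t → f t = 0)
    {t : ℝ} (ht : 0 < t) : IntegrableOn f (Set.Ioi t) := by
  have hIoi : Set.Ioc t (max R t) ∪ Set.Ioi (max R t) = Set.Ioi t :=
    Set.Ioc_union_Ioi_eq_Ioi (le_max_right R t)
  rw [← hIoi]
  refine MeasureTheory.IntegrableOn.union ?_ ?_
  · have hsub : Set.Icc t (max R t) ⊆ Set.Ioi 0 := fun x hx => lt_of_lt_of_le ht hx.1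
    exact ((hc.mono hsub).integrableOn_Icc).mono_set Set.Ioc_subset_Icc_self
  · have heq : ∀ x ∈ Set.Ioi (max R t), f x = (0 : ℝ → ℝ) x := fun x hx =>
      h0 x (lt_of_le_of_lt (le_max_left R t) hx)
    exact (integrableOn_congr_fun heq measurableSet_Ioi).mpr (integrableOn_zero)

lemma helper_split {f : ℝ → ℝ} {s u : ℝ} (hs : 0 < s) (hsu : s ≤ u)
    (hint : IntegrableOn f (Set.Ioi s)) :
    ∫ x in Set.Ioi s, f x = (∫ x in s..u, f x) + ∫ x in Set.Ioi u, f x := by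
  rw [intervalIntegral.integral_of_le hsu]
  rw [← MeasureTheory.setIntegral_union (Set.Ioc_disjoint_Ioi le_rfl) measurableSet_Ioi
    (hint.mono_set Set.Ioc_subset_Ioi_self)
    (hint.mono_set (Set.Ioi_subset_Ioi hsu)),
    Set.Ioc_union_Ioi_eq_Ioi hsu]

lemma helper_hasDerivAt {f : ℝ → ℝ} {R : ℝ} (hc : ContinuousOn f (Set.Ioi 0))
    (h0 : ∀ t, R < t → f t = 0) {t : ℝ} (ht : 0 < t) :
    HasDerivAt (fun u => ∫ x in Set.Ioi u, f x) (-(f t)) t := by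
  have h2 : 0 < t / 2 := by linarith
  have hint : IntegrableOn f (Set.Ioi (t/2)) := helper_integrableOn hc h0 h2
  have hII : IntervalIntegrable f volume (t/2) t := by
    rw [intervalIntegrable_iff_integrableOn_Ioc_of_le (by linarith)]
    exact hint.mono_set Set.Ioc_subset_Ioi_self
  have hmeas : StronglyMeasurableAtFilter f (𝓝 t) :=
    hc.stronglyMeasurableAtFilter isOpen_Ioi _ ht
  have hcont : ContinuousAt f t := hc.continuousAt (isOpen_Ioi.mem_nhds ht)
  have hD : HasDerivAt (fun u => (∫ x in Set.Ioi (t/2), f x) - ∫ x in (t/2)..u, f x)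
      (-(f t)) t :=
    (intervalIntegral.integral_hasDerivAt_right hII hmeas hcont).const_sub _
  apply hD.congr_of_eventuallyEq
  filter_upwards [isOpen_Ioi.mem_nhds (show t ∈ Set.Ioi (t/2) by simp [Set.mem_Ioi]; linarith)]
    with u hu
  have := helper_split h2 (le_of_lt hu) hint
  linarith

lemma helper_integral_Ioi {f H : ℝ → ℝ} {R t : ℝ} (ht : 0 < t)
    (hder : ∀ s, 0 < s → HasDerivAt H (-(f s)) s)
    (hint : IntegrableOn f (Set.Ioi t))
    (hf0 : ∀ s, R < s → f s = 0) (hH0 : ∀ s, R < s → H s = 0) :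
    ∫ x in Set.Ioi t, f x = H t := by
  set M := max (R + 1) (t + 1) with hM
  have htM : t ≤ M := le_trans (by linarith) (le_max_right _ _)
  have hRM : R < M := lt_of_lt_of_le (by linarith) (le_max_left _ _)
  have h2 : ∫ x in Set.Ioi M, f x = 0 := by
    rw [MeasureTheory.setIntegral_congr_fun measurableSet_Ioi
      (fun x hx => hf0 x (hRM.trans hx))]
    simp
  have h3 : (∫ x in t..M, f x) = -H M - -H t := by
    refine intervalIntegral.integral_eq_sub_of_hasDerivAt (f := fun s => -H s) ?_ ?_
    · intro x hx
      rw [Set.uIcc_of_le htM] at hx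
      have h := (hder x (lt_of_lt_of_le ht hx.1)).neg
      rw [neg_neg] at h
      exact h
    · rw [intervalIntegrable_iff_integrableOn_Ioc_of_le htM]
      exact hint.mono_set Set.Ioc_subset_Ioi_self
  have h4 := helper_split ht htM hint
  rw [hH0 M hRM] at h3
  rw [h4, h2, h3]
  ring

lemma helper_ext {f : ℝ → ℝ} {L : ℝ}
    (hc : ContinuousOn f (Set.Ioi 0)) (hlim : Tendsto f (nhdsWithin 0 (Set.Ioi 0)) (𝓝 L)) :
    ContinuousOn (fun t => if 0 < t then f t else L) (Set.Ici 0) := by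
  intro x hx
  rcases eq_or_lt_of_le (Set.mem_Ici.mp hx) with h | h
  · subst h
    rw [ContinuousWithinAt]
    simp only [lt_irrefl, if_false]
    have hset : Set.Ici (0:ℝ) = {0} ∪ Set.Ioi 0 := by
      ext y; simp [le_iff_lt_or_eq, or_comm, eq_comm]
    rw [hset, nhdsWithin_union, nhdsWithin_singleton, tendsto_sup]
    constructor
    · simpa using tendsto_pure_nhds (fun t => if 0 < t then f t else L) 0
    · apply Tendsto.congr' _ hlim
      filter_upwards [self_mem_nhdsWithin] with y hy
      simp [Set.mem_Ioi.mp hy]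
  · have hcg : ContinuousAt (fun t => if 0 < t then f t else L) x := by
      apply (hc.continuousAt (isOpen_Ioi.mem_nhds h)).congr
      filter_upwards [isOpen_Ioi.mem_nhds h] with y hy
      simp [Set.mem_Ioi.mp hy]
    exact hcg.continuousWithinAt

lemma helper_bdd {f : ℝ → ℝ} {R L : ℝ}
    (hc : ContinuousOn f (Set.Ioi 0)) (hlim : Tendsto f (nhdsWithin 0 (Set.Ioi 0)) (𝓝 L))
    (h0 : ∀ t, R < t → f t = 0) :
    ∃ M : ℝ, 0 ≤ M ∧ ∀ t, 0 < t → |f t| ≤ M := by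
  obtain ⟨M, hM⟩ := (isCompact_Icc (a := (0:ℝ)) (b := R)).exists_bound_of_continuousOn
    ((helper_ext hc hlim).mono Set.Icc_subset_Ici_self)
  refine ⟨max M 0, le_max_right _ _, fun t ht => ?_⟩
  by_cases htR : t ≤ R
  · have := hM t ⟨ht.le, htR⟩
    simp only [if_pos ht, Real.norm_eq_abs] at this
    exact le_trans this (le_max_left _ _)
  · rw [h0 t (not_le.mp htR)]
    simp

lemma helper_rpow_eq {b : ℕ} {s : ℝ} (hs : 0 < s) :
    ((s ^ (b+2) : ℝ))⁻¹ = s ^ (-((b:ℝ)+2)) := by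
  rw [Real.rpow_neg hs.le, ← Real.rpow_natCast s (b+2)]
  push_cast
  ring_nf

lemma helper_integrable_inv_pow {b : ℕ} {t : ℝ} (ht : 0 < t) :
    IntegrableOn (fun s : ℝ => ((s ^ (b+2) : ℝ))⁻¹) (Set.Ioi t) := by
  refine (integrableOn_congr_fun (fun s hs => helper_rpow_eq (ht.trans hs))
    measurableSet_Ioi).mpr ?_
  exact integrableOn_Ioi_rpow_of_lt (by push_cast; linarith) ht

lemma helper_integral_inv_pow {b : ℕ} {t : ℝ} (ht : 0 < t) :
    ∫ s in Set.Ioi t, ((s ^ (b+2) : ℝ))⁻¹ = (t ^ (b+1))⁻¹ / (b+1) := by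
  rw [MeasureTheory.setIntegral_congr_fun measurableSet_Ioi
    (fun s hs => helper_rpow_eq (ht.trans hs))]
  rw [integral_Ioi_rpow_of_lt (by push_cast; linarith) ht]
  rw [show (-((b:ℝ)+2)) + 1 = -((b:ℝ)+1) by ring]
  rw [Real.rpow_neg ht.le, ← Real.rpow_natCast t (b+1)]
  push_cast
  rw [neg_div_neg_eq]

lemma helper_bdd_cc {φ : ℝ → ℝ} {R : ℝ} (hφ : MemCc R φ) :
    ∃ M : ℝ, 0 ≤ M ∧ ∀ t, 0 ≤ t → |φ t| ≤ M := by
  obtain ⟨M, hM⟩ := (isCompact_Icc (a := (0:ℝ)) (b := max R 0)).exists_bound_of_continuousOn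
    (hφ.1.mono Set.Icc_subset_Ici_self)
  refine ⟨max M 0, le_max_right _ _, fun t ht => ?_⟩
  by_cases htR : t ≤ max R 0
  · exact le_trans (by simpa using hM t ⟨ht, htR⟩) (le_max_left _ _)
  · rw [hφ.2.2 t (lt_of_le_of_lt (le_max_left R 0) (not_le.mp htR))]
    simp

lemma helper_phi_tendsto {φ : ℝ → ℝ} {R : ℝ} (hφ : MemCc R φ) :
    Tendsto φ (nhdsWithin 0 (Set.Ioi 0)) (𝓝 (φ 0)) :=
  (hφ.1 0 Set.self_mem_Ici).mono_left (nhdsWithin_mono 0 Set.Ioi_subset_Ici_self)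

lemma helper_tendsto {φ : ℝ → ℝ} {R : ℝ} (hφ : MemCc R φ) (b : ℕ) :
    Tendsto (fun t : ℝ => t ^ (b+1) * ∫ s in Set.Ioi t, φ s / s ^ (b+2))
      (nhdsWithin 0 (Set.Ioi 0)) (𝓝 (φ 0 / (b+1))) := by
  obtain ⟨Mφ, hMφ0, hMφ⟩ := helper_bdd_cc hφ
  have key : Tendsto (fun t : ℝ => ∫ u in Set.Ioi 1, φ (t * u) / u ^ (b+2))
      (nhdsWithin 0 (Set.Ioi 0)) (𝓝 (∫ u in Set.Ioi 1, φ 0 / u ^ (b+2))) := by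
    apply MeasureTheory.tendsto_integral_filter_of_dominated_convergence
      (fun u => Mφ * ((u ^ (b+2) : ℝ))⁻¹)
    · filter_upwards [self_mem_nhdsWithin] with t ht
      apply ContinuousOn.aestronglyMeasurable _ measurableSet_Ioi
      apply ContinuousOn.div
      · exact hφ.1.comp ((continuous_mul_left t).continuousOn)
          (fun u hu => Set.mem_Ici.mpr (mul_nonneg (le_of_lt ht) (le_of_lt (lt_trans one_pos hu))))
      · exact (continuous_pow (b+2)).continuousOn
      · exact fun u hu => pow_ne_zero _ (ne_of_gt (lt_trans one_pos hu))
    · filter_upwards [self_mem_nhdsWithin] with t ht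
      rw [ae_restrict_iff' measurableSet_Ioi]
      refine ae_of_all _ (fun u hu => ?_)
      have hu0 : (0:ℝ) < u := lt_trans one_pos hu
      have hpow : (0:ℝ) < u ^ (b+2) := pow_pos hu0 _
      rw [Real.norm_eq_abs, abs_div, abs_of_pos hpow, div_eq_mul_inv]
      exact mul_le_mul_of_nonneg_right (hMφ _ (mul_nonneg ht.le hu0.le)) (by positivity)
    · exact (helper_integrable_inv_pow one_pos).const_mul Mφ
    · rw [ae_restrict_iff' measurableSet_Ioi]
      refine ae_of_all _ (fun u hu => ?_)
      have hu0 : (0:ℝ) < u := lt_trans one_pos hu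
      have h1 : Tendsto (fun t : ℝ => t * u) (nhdsWithin 0 (Set.Ioi 0))
          (nhdsWithin 0 (Set.Ioi 0)) := by
        rw [tendsto_nhdsWithin_iff]
        constructor
        · have := (continuous_id.mul (continuous_const (y := u))).tendsto (0:ℝ)
          have h3 := (tendsto_id (x := 𝓝 (0:ℝ))).mul_const u
          rw [zero_mul] at h3
          exact h3.mono_left nhdsWithin_le_nhds
        · filter_upwards [self_mem_nhdsWithin] with t ht
          exact mul_pos ht hu0
      exact ((helper_phi_tendsto hφ).comp h1).div_const _
  have hval : ∫ u in Set.Ioi 1, φ 0 / u ^ (b+2) = φ 0 / (b+1) := by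
    simp_rw [div_eq_mul_inv]
    rw [MeasureTheory.integral_const_mul, helper_integral_inv_pow one_pos]
    simp
  rw [hval] at key
  apply key.congr'
  filter_upwards [self_mem_nhdsWithin] with t ht
  have ht0 : (0:ℝ) < t := ht
  have hcomp := MeasureTheory.integral_comp_mul_left_Ioi
    (fun s => φ s / s ^ (b+2)) 1 ht0
  simp only [mul_one, smul_eq_mul] at hcomp
  have hcongr : ∫ u in Set.Ioi 1, φ (t * u) / u ^ (b+2)
      = ∫ u in Set.Ioi 1, t ^ (b+2) * (φ (t * u) / (t * u) ^ (b+2)) := by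
    apply MeasureTheory.setIntegral_congr_fun measurableSet_Ioi
    intro u hu
    have hu0 : (0:ℝ) < u := lt_trans one_pos hu
    show φ (t * u) / u ^ (b+2) = t ^ (b+2) * (φ (t * u) / (t * u) ^ (b+2))
    rw [mul_pow]
    field_simp
  rw [hcongr, MeasureTheory.integral_const_mul, hcomp]
  have : t ^ (b+2) = t ^ (b+1) * t := by ring
  rw [this]
  field_simp

section surj
variable {φ : ℝ → ℝ} {R : ℝ} (b : ℕ)

lemma RaInv_eq (φ : ℝ → ℝ) {t : ℝ} (ht : 0 < t) :
    RaInv (b+1) φ t = φ t / t ^ (b+1) - ((b:ℝ)+1) * ∫ s in Set.Ioi t, φ s / s ^ (b+2) := by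
  rw [RaInv, if_pos ht]
  norm_num

lemma helper_g_cont (hφ : MemCc R φ) :
    ContinuousOn (fun s : ℝ => φ s / s ^ (b+2)) (Set.Ioi 0) := by
  apply ContinuousOn.div (hφ.1.mono Set.Ioi_subset_Ici_self)
    (continuous_pow (b+2)).continuousOn
  exact fun s hs => pow_ne_zero _ (ne_of_gt hs)

lemma helper_g_zero (hφ : MemCc R φ) : ∀ s : ℝ, R < s → φ s / s ^ (b+2) = 0 := by
  intro s hs; rw [hφ.2.2 s hs, zero_div]

lemma helper_G_hasDerivAt (hφ : MemCc R φ) {t : ℝ} (ht : 0 < t) :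
    HasDerivAt (fun u => ∫ s in Set.Ioi u, φ s / s ^ (b+2)) (-(φ t / t ^ (b+2))) t :=
  helper_hasDerivAt (helper_g_cont b hφ) (helper_g_zero b hφ) ht

lemma helper_G_zero (hφ : MemCc R φ) {t : ℝ} (ht : R < t) :
    ∫ s in Set.Ioi t, φ s / s ^ (b+2) = 0 := by
  rw [MeasureTheory.setIntegral_congr_fun measurableSet_Ioi
    (fun s hs => helper_g_zero b hφ s (ht.trans hs))]
  simp

lemma helper_RaInv_contOn (hR : 0 < R) (hφ : MemCc R φ) :
    ContinuousOn (RaInv (b+1) φ) (Set.Ioi 0) := by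
  apply ContinuousOn.congr (f := fun t : ℝ =>
    φ t / t ^ (b+1) - ((b:ℝ)+1) * ∫ s in Set.Ioi t, φ s / s ^ (b+2))
  · apply ContinuousOn.sub
    · apply ContinuousOn.div (hφ.1.mono Set.Ioi_subset_Ici_self)
        (continuous_pow (b+1)).continuousOn
      exact fun s hs => pow_ne_zero _ (ne_of_gt hs)
    · apply ContinuousOn.mul continuousOn_const
      intro t ht
      exact ((helper_G_hasDerivAt b hφ ht).differentiableAt.continuousAt).continuousWithinAt
  · exact fun t ht => RaInv_eq b φ ht

-- key derivative : H s := s^(b+1) * G s has derivative -(RaInv φ s * s ^ b)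
lemma helper_H_hasDerivAt (hφ : MemCc R φ) {s : ℝ} (hs : 0 < s) :
    HasDerivAt (fun u => u ^ (b+1) * ∫ x in Set.Ioi u, φ x / x ^ (b+2))
      (-(RaInv (b+1) φ s * s ^ b)) s := by
  have h := (hasDerivAt_pow (b+1) s).mul (helper_G_hasDerivAt b hφ hs)
  refine h.congr_deriv ?_
  symm
  rw [RaInv_eq b φ hs]
  have hsne : s ≠ 0 := ne_of_gt hs
  push_cast
  field_simp
  ring

lemma helper_integral_RaInv (hR : 0 < R) (hφ : MemCc R φ) {t : ℝ} (ht : 0 < t) :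
    ∫ r in Set.Ioi t, RaInv (b+1) φ r * r ^ b
      = t ^ (b+1) * ∫ s in Set.Ioi t, φ s / s ^ (b+2) := by
  apply helper_integral_Ioi (R := R) ht
  · exact fun s hs => helper_H_hasDerivAt b hφ hs
  · apply helper_integrableOn (R := R) _ _ ht
    · exact (helper_RaInv_contOn b hR hφ).mul (continuous_pow b).continuousOn
    · intro s hs
      rw [RaInv_eq b φ (hR.trans hs), hφ.2.2 s hs, helper_G_zero b hφ hs]
      simp
  · intro s hs
    rw [RaInv_eq b φ (hR.trans hs), hφ.2.2 s hs, helper_G_zero b hφ hs]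
    simp
  · intro s hs
    rw [helper_G_zero b hφ hs, mul_zero]

lemma helper_tendsto_taζ (hR : 0 < R) (hφ : MemCc R φ) :
    Tendsto (fun t : ℝ => t ^ (b+1) * RaInv (b+1) φ t) (nhdsWithin 0 (Set.Ioi 0)) (𝓝 0) := by
  have h1 : Tendsto (fun t : ℝ => φ t - ((b:ℝ)+1) *
      (t ^ (b+1) * ∫ s in Set.Ioi t, φ s / s ^ (b+2))) (nhdsWithin 0 (Set.Ioi 0))
      (𝓝 (φ 0 - ((b:ℝ)+1) * (φ 0 / ((b:ℝ)+1)))) := by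
    exact (helper_phi_tendsto hφ).sub ((helper_tendsto hφ b).const_mul _)
  have h2 : φ 0 - ((b:ℝ)+1) * (φ 0 / ((b:ℝ)+1)) = 0 := by
    field_simp
    ring
  rw [h2] at h1
  apply h1.congr'
  filter_upwards [self_mem_nhdsWithin] with t ht
  have ht0 : (0:ℝ) < t := ht
  rw [RaInv_eq b φ ht0]
  field_simp

lemma helper_memD (hR : 0 < R) (hφ : MemCc R φ) : MemD (b+1) R (RaInv (b+1) φ) := by
  refine ⟨helper_RaInv_contOn b hR hφ, ?_, ?_, ?_, ?_⟩
  · intro t ht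
    rw [RaInv, if_neg (not_lt.mpr ht)]
  · intro t ht
    rw [RaInv_eq b φ (hR.trans ht), hφ.2.2 t ht, helper_G_zero b hφ ht]
    simp
  · exact helper_tendsto_taζ b hR hφ
  · refine ⟨φ 0 / ((b:ℝ)+1), ?_⟩
    have h := (helper_tendsto hφ b)
    apply h.congr'
    filter_upwards [self_mem_nhdsWithin] with t ht
    have ht0 : (0:ℝ) < t := ht
    rw [show (b+1-1 : ℕ) = b from rfl, helper_integral_RaInv b hR hφ ht0]

lemma helper_Ra_RaInv (hR : 0 < R) (hφ : MemCc R φ) {t : ℝ} (ht : 0 < t) :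
    Ra (b+1) (RaInv (b+1) φ) t = φ t := by
  rw [Ra, show (b+1-1 : ℕ) = b from rfl, helper_integral_RaInv b hR hφ ht,
    RaInv_eq b φ ht]
  push_cast
  field_simp
  ring

end surj

section inj
variable {ζ₁ ζ₂ : ℝ → ℝ} {R : ℝ} (b : ℕ)

lemma helper_f_cont {ζ : ℝ → ℝ} (h : ContinuousOn ζ (Set.Ioi 0)) :
    ContinuousOn (fun r : ℝ => ζ r * r ^ b) (Set.Ioi 0) :=
  h.mul (continuous_pow b).continuousOn

lemma helper_f_zero {ζ : ℝ → ℝ} (h : ∀ t : ℝ, R < t → ζ t = 0) :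
    ∀ t : ℝ, R < t → ζ t * t ^ b = 0 := fun t ht => by rw [h t ht, zero_mul]

lemma helper_F_zero {ζ : ℝ → ℝ} (h : ∀ t : ℝ, R < t → ζ t = 0) {t : ℝ} (ht : R < t) :
    ∫ r in Set.Ioi t, ζ r * r ^ b = 0 := by
  rw [MeasureTheory.setIntegral_congr_fun measurableSet_Ioi
    (fun s hs => helper_f_zero b h s (ht.trans hs))]
  simp

lemma helper_inj (hR : 0 < R) (hζ₁ : MemD (b+1) R ζ₁) (hζ₂ : MemD (b+1) R ζ₂)
    (h : ∀ t : ℝ, 0 < t → Ra (b+1) ζ₁ t = Ra (b+1) ζ₂ t) : ζ₁ = ζ₂ := by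
  set F₁ : ℝ → ℝ := fun u => ∫ r in Set.Ioi u, ζ₁ r * r ^ b with hF₁
  set F₂ : ℝ → ℝ := fun u => ∫ r in Set.Ioi u, ζ₂ r * r ^ b with hF₂
  have hRa : ∀ t : ℝ, 0 < t →
      ζ₁ t * t ^ (b+1) + ((b:ℝ)+1) * F₁ t = ζ₂ t * t ^ (b+1) + ((b:ℝ)+1) * F₂ t := by
    intro t ht
    have := h t ht
    rw [Ra, Ra, show (b+1-1:ℕ) = b from rfl] at this
    push_cast at this
    exact this
  set D : ℝ → ℝ := fun u => (F₁ u - F₂ u) * (u ^ (b+1))⁻¹ with hD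
  have hDder : ∀ t : ℝ, 0 < t → HasDerivAt D 0 t := by
    intro t ht
    have h₁ : HasDerivAt F₁ (-(ζ₁ t * t ^ b)) t :=
      helper_hasDerivAt (helper_f_cont b hζ₁.1) (helper_f_zero b hζ₁.2.2.1) ht
    have h₂ : HasDerivAt F₂ (-(ζ₂ t * t ^ b)) t :=
      helper_hasDerivAt (helper_f_cont b hζ₂.1) (helper_f_zero b hζ₂.2.2.1) ht
    have hinv : HasDerivAt (fun u : ℝ => (u ^ (b+1))⁻¹)
        (-(((b+1:ℕ):ℝ) * t ^ (b+1-1)) / (t ^ (b+1)) ^ 2) t :=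
      (hasDerivAt_pow (b+1) t).inv (pow_ne_zero _ (ne_of_gt ht))
    have hmul := (h₁.sub h₂).mul hinv
    refine hmul.congr_deriv ?_
    symm
    have key : ((b:ℝ)+1) * (F₁ t - F₂ t) = (ζ₂ t - ζ₁ t) * t ^ (b+1) := by
      have := hRa t ht; linarith
    rw [show (b+1-1:ℕ) = b from rfl]
    push_cast
    have htne : t ≠ 0 := ne_of_gt ht
    rw [Pi.sub_apply]
    field_simp
    linear_combination t ^ b * key
  have hFeq : ∀ t : ℝ, 0 < t → F₁ t = F₂ t := by
    intro t ht
    set M := max (R+1) (t+1) with hM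
    have htM : t ≤ M := le_trans (by linarith) (le_max_right _ _)
    have hRM : R < M := lt_of_lt_of_le (by linarith) (le_max_left _ _)
    have hcont : ContinuousOn D (Set.Icc t M) := fun x hx =>
      ((hDder x (lt_of_lt_of_le ht hx.1)).differentiableAt.continuousAt).continuousWithinAt
    have := constant_of_has_deriv_right_zero hcont
      (fun x hx => (hDder x (lt_of_lt_of_le ht hx.1)).hasDerivWithinAt) M
      ⟨htM, le_refl M⟩
    have hDM : D M = 0 := by
      rw [hD]
      simp only
      rw [hF₁, hF₂]
      simp only
      rw [helper_F_zero b hζ₁.2.2.1 hRM, helper_F_zero b hζ₂.2.2.1 hRM]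
      simp
    have hDt : D t = 0 := by rw [← this, hDM]
    have : (F₁ t - F₂ t) * (t ^ (b+1))⁻¹ = 0 := hDt
    rcases mul_eq_zero.mp this with h' | h'
    · linarith [h']
    · exact absurd h' (inv_ne_zero (pow_ne_zero _ (ne_of_gt ht)))
  funext t
  by_cases ht : 0 < t
  · have h1 := hRa t ht
    rw [hFeq t ht] at h1
    have : ζ₁ t * t ^ (b+1) = ζ₂ t * t ^ (b+1) := by linarith
    exact mul_right_cancel₀ (pow_ne_zero _ (ne_of_gt ht)) this
  · rw [hζ₁.2.1 t (not_lt.mp ht), hζ₂.2.1 t (not_lt.mp ht)]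

end inj

section ext
variable {ζ : ℝ → ℝ} {R : ℝ} (b : ℕ)

lemma helper_F_cont (hζ : MemD (b+1) R ζ) :
    ContinuousOn (fun u : ℝ => ∫ r in Set.Ioi u, ζ r * r ^ b) (Set.Ioi 0) :=
  fun t ht => ((helper_hasDerivAt (helper_f_cont b hζ.1)
    (helper_f_zero b hζ.2.2.1) ht).differentiableAt.continuousAt).continuousWithinAt

lemma helper_Ra_cont (hζ : MemD (b+1) R ζ) :
    ContinuousOn (Ra (b+1) ζ) (Set.Ioi 0) := by
  apply ContinuousOn.add (hζ.1.mul (continuous_pow (b+1)).continuousOn)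
  exact continuousOn_const.mul (helper_F_cont b hζ)

lemma helper_Ra_tendsto (hζ : MemD (b+1) R ζ) {L₀ : ℝ}
    (hL₀ : Tendsto (fun t : ℝ => ∫ r in Set.Ioi t, ζ r * r ^ b)
      (nhdsWithin 0 (Set.Ioi 0)) (𝓝 L₀)) :
    Tendsto (Ra (b+1) ζ) (nhdsWithin 0 (Set.Ioi 0)) (𝓝 (((b:ℝ)+1) * L₀)) := by
  have h1 : Tendsto (fun t : ℝ => ζ t * t ^ (b+1)) (nhdsWithin 0 (Set.Ioi 0)) (𝓝 0) := by
    apply hζ.2.2.2.1.congr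
    intro t; ring
  have := h1.add (hL₀.const_mul ((b:ℝ)+1))
  rw [zero_add] at this
  apply this.congr
  intro t
  rw [Ra, show (b+1-1:ℕ) = b from rfl]
  push_cast
  ring

lemma helper_Ra_zero (hR : 0 < R) (hζ : MemD (b+1) R ζ) {t : ℝ} (ht : R < t) :
    Ra (b+1) ζ t = 0 := by
  rw [Ra, show (b+1-1:ℕ) = b from rfl, hζ.2.2.1 t ht, helper_F_zero b hζ.2.2.1 ht]
  simp

lemma helper_extension (hR : 0 < R) (hζ : MemD (b+1) R ζ) :
    ∃ φ : ℝ → ℝ, MemCc R φ ∧ (∀ t : ℝ, 0 < t → φ t = Ra (b+1) ζ t) ∧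
      (∀ L : ℝ, Tendsto (fun t : ℝ => ∫ r in Set.Ioi t, ζ r * r ^ (b+1-1))
        (nhdsWithin 0 (Set.Ioi 0)) (𝓝 L) → φ 0 = ((b+1:ℕ):ℝ) * L) := by
  obtain ⟨L₀, hL₀⟩ := hζ.2.2.2.2
  rw [show (b+1-1:ℕ) = b from rfl] at hL₀
  refine ⟨fun t => if 0 < t then Ra (b+1) ζ t else if t = 0 then ((b:ℝ)+1) * L₀ else 0,
    ⟨?_, ?_, ?_⟩, ?_, ?_⟩
  · apply ContinuousOn.congr (helper_ext (helper_Ra_cont b hζ)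
      (helper_Ra_tendsto b hζ hL₀))
    intro t ht
    rcases eq_or_lt_of_le (Set.mem_Ici.mp ht) with h | h
    · simp [← h]
    · simp [h]
  · intro t ht
    have h1 : ¬ (0:ℝ) < t := by linarith
    have h2 : t ≠ 0 := by linarith
    simp [h1, h2]
  · intro t ht
    simp [hR.trans ht, helper_Ra_zero b hR hζ ht]
  · intro t ht
    simp [ht]
  · intro L hL
    rw [show (b+1-1:ℕ) = b from rfl] at hL
    have : L = L₀ := tendsto_nhds_unique hL hL₀
    subst this
    push_cast
    simp

end ext

section bounds
variable {ζ : ℝ → ℝ} {R : ℝ} (b : ℕ)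

lemma helper_c1 (hR : 0 < R) (hζ : MemD (b+1) R ζ) {t : ℝ} (ht : 0 < t) :
    |Ra (b+1) ζ t| ≤ ((b:ℝ)+1) * DNorm (b+1) ζ := by
  obtain ⟨L₀, hL₀⟩ := hζ.2.2.2.2
  rw [show (b+1-1:ℕ) = b from rfl] at hL₀
  obtain ⟨M₁, hM₁0, hM₁⟩ := helper_bdd (f := fun t : ℝ => t ^ (b+1) * ζ t)
    ((continuous_pow (b+1)).continuousOn.mul hζ.1) hζ.2.2.2.1
    (fun s hs => by show s ^ (b+1) * ζ s = 0; rw [hζ.2.2.1 s hs, mul_zero])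
  obtain ⟨M₂, hM₂0, hM₂⟩ := helper_bdd (helper_F_cont b hζ) hL₀
    (fun s hs => helper_F_zero b hζ.2.2.1 hs)
  have habs : ∀ s : ℝ, 0 < s → s ^ (b+1) * |ζ s| = |s ^ (b+1) * ζ s| := by
    intro s hs
    rw [abs_mul, abs_of_pos (pow_pos hs _)]
  have hbdd₁ : BddAbove ((fun t : ℝ => t ^ (b+1) * |ζ t|) '' Set.Ioi 0) := by
    refine ⟨M₁, fun y hy => ?_⟩
    obtain ⟨s, hs, rfl⟩ := hy
    show s ^ (b+1) * |ζ s| ≤ M₁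
    rw [habs s hs]
    exact hM₁ s hs
  have hbdd₂ : BddAbove
      ((fun t : ℝ => |∫ r in Set.Ioi t, ζ r * r ^ (b+1-1)|) '' Set.Ioi 0) := by
    refine ⟨M₂, fun y hy => ?_⟩
    obtain ⟨s, hs, rfl⟩ := hy
    exact hM₂ s hs
  set s₁ := sSup ((fun t : ℝ => t ^ (b+1) * |ζ t|) '' Set.Ioi 0) with hs₁
  set s₂ := sSup ((fun t : ℝ => |∫ r in Set.Ioi t, ζ r * r ^ (b+1-1)|) '' Set.Ioi 0) with hs₂
  have hle₁ : ∀ s : ℝ, 0 < s → s ^ (b+1) * |ζ s| ≤ s₁ :=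
    fun s hs => le_csSup hbdd₁ ⟨s, hs, rfl⟩
  have hle₂ : ∀ s : ℝ, 0 < s → |∫ r in Set.Ioi s, ζ r * r ^ (b+1-1)| ≤ s₂ :=
    fun s hs => le_csSup hbdd₂ ⟨s, hs, rfl⟩
  have hs₁0 : 0 ≤ s₁ := le_trans (by positivity) (hle₁ 1 one_pos)
  have hs₂0 : 0 ≤ s₂ := le_trans (abs_nonneg _) (hle₂ 1 one_pos)
  have key : |Ra (b+1) ζ t| ≤ s₁ + ((b:ℝ)+1) * s₂ := by
    rw [Ra]
    apply le_trans (abs_add_le _ _)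
    apply add_le_add
    · calc |ζ t * t ^ (b+1)| = t ^ (b+1) * |ζ t| := by
            rw [abs_mul, abs_of_pos (pow_pos ht _)]; ring
        _ ≤ s₁ := hle₁ t ht
    · rw [abs_mul]
      push_cast
      rw [abs_of_pos (by positivity : (0:ℝ) < (b:ℝ)+1)]
      exact mul_le_mul_of_nonneg_left (hle₂ t ht) (by positivity)
  rw [DNorm, ← hs₁, ← hs₂]
  calc |Ra (b+1) ζ t| ≤ s₁ + ((b:ℝ)+1) * s₂ := key
    _ ≤ ((b:ℝ)+1) * (s₁ + s₂) := by nlinarith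
end bounds


section lin
variable {R : ℝ} (b : ℕ)

lemma helper_add {ζ₁ ζ₂ : ℝ → ℝ} (hζ₁ : MemD (b+1) R ζ₁) (hζ₂ : MemD (b+1) R ζ₂)
    {t : ℝ} (ht : 0 < t) :
    Ra (b+1) (fun s => ζ₁ s + ζ₂ s) t = Ra (b+1) ζ₁ t + Ra (b+1) ζ₂ t := by
  have h1 : IntegrableOn (fun s : ℝ => ζ₁ s * s ^ b) (Set.Ioi t) :=
    helper_integrableOn (helper_f_cont b hζ₁.1) (helper_f_zero b hζ₁.2.2.1) ht
  have h2 : IntegrableOn (fun s : ℝ => ζ₂ s * s ^ b) (Set.Ioi t) :=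
    helper_integrableOn (helper_f_cont b hζ₂.1) (helper_f_zero b hζ₂.2.2.1) ht
  have key : ∫ s in Set.Ioi t, (ζ₁ s + ζ₂ s) * s ^ b
      = (∫ s in Set.Ioi t, ζ₁ s * s ^ b) + ∫ s in Set.Ioi t, ζ₂ s * s ^ b := by
    rw [← MeasureTheory.integral_add h1 h2]
    apply MeasureTheory.setIntegral_congr_fun measurableSet_Ioi
    intro s _
    show (ζ₁ s + ζ₂ s) * s ^ b = ζ₁ s * s ^ b + ζ₂ s * s ^ b
    ring
  simp only [Ra, show (b+1-1:ℕ) = b from rfl]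
  rw [key]
  ring

lemma helper_smul {ζ : ℝ → ℝ} (c : ℝ) {t : ℝ} (ht : 0 < t) :
    Ra (b+1) (fun s => c * ζ s) t = c * Ra (b+1) ζ t := by
  have key : ∫ s in Set.Ioi t, (c * ζ s) * s ^ b = c * ∫ s in Set.Ioi t, ζ s * s ^ b := by
    rw [← MeasureTheory.integral_const_mul]
    apply MeasureTheory.setIntegral_congr_fun measurableSet_Ioi
    intro s _
    show (c * ζ s) * s ^ b = c * (ζ s * s ^ b)
    ring
  simp only [Ra, show (b+1-1:ℕ) = b from rfl]
  rw [key]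
  ring

end lin

lemma helper_c2 {φ : ℝ → ℝ} {R : ℝ} (b : ℕ) (hR : 0 < R) (hφ : MemCc R φ) :
    DNorm (b+1) (RaInv (b+1) φ) ≤ 3 * sSup ((fun t : ℝ => |φ t|) '' Set.Ici 0) := by
  obtain ⟨Mφ, hMφ0, hMφ⟩ := helper_bdd_cc hφ
  have hbdd : BddAbove ((fun t : ℝ => |φ t|) '' Set.Ici 0) := by
    refine ⟨Mφ, fun y hy => ?_⟩
    obtain ⟨s, hs, rfl⟩ := hy
    exact hMφ s hs
  set Sφ := sSup ((fun t : ℝ => |φ t|) '' Set.Ici 0) with hSφdef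
  have hS : ∀ t : ℝ, 0 ≤ t → |φ t| ≤ Sφ := fun t ht => le_csSup hbdd ⟨t, ht, rfl⟩
  have hS0 : 0 ≤ Sφ := le_trans (abs_nonneg _) (hS 0 le_rfl)
  have hGb : ∀ t : ℝ, 0 < t → |∫ s in Set.Ioi t, φ s / s ^ (b+2)|
      ≤ Sφ * ((t ^ (b+1))⁻¹ / ((b:ℝ)+1)) := by
    intro t ht
    have hint : IntegrableOn (fun s : ℝ => φ s / s ^ (b+2)) (Set.Ioi t) :=
      helper_integrableOn (helper_g_cont b hφ) (helper_g_zero b hφ) ht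
    calc |∫ s in Set.Ioi t, φ s / s ^ (b+2)|
        = ‖∫ s in Set.Ioi t, φ s / s ^ (b+2)‖ := (Real.norm_eq_abs _).symm
      _ ≤ ∫ s in Set.Ioi t, ‖φ s / s ^ (b+2)‖ := norm_integral_le_integral_norm _
      _ ≤ ∫ s in Set.Ioi t, Sφ * ((s ^ (b+2) : ℝ))⁻¹ := by
          apply MeasureTheory.setIntegral_mono_on hint.norm
            ((helper_integrable_inv_pow ht).const_mul Sφ) measurableSet_Ioi
          intro s hs
          have hs0 : (0:ℝ) < s := ht.trans hs
          have hp : (0:ℝ) < s ^ (b+2) := pow_pos hs0 _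
          rw [Real.norm_eq_abs, abs_div, abs_of_pos hp, div_eq_mul_inv]
          exact mul_le_mul_of_nonneg_right (hS s hs0.le) (by positivity)
      _ = Sφ * ((t ^ (b+1))⁻¹ / ((b:ℝ)+1)) := by
          rw [MeasureTheory.integral_const_mul, helper_integral_inv_pow ht]
  have hterm1 : ∀ t : ℝ, 0 < t → t ^ (b+1) * |RaInv (b+1) φ t| ≤ 2 * Sφ := by
    intro t ht
    have hp : (0:ℝ) < t ^ (b+1) := pow_pos ht _
    have h1 : t ^ (b+1) * |RaInv (b+1) φ t|
        = |φ t - ((b:ℝ)+1) * (t ^ (b+1) * ∫ s in Set.Ioi t, φ s / s ^ (b+2))| := by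
      rw [RaInv_eq b φ ht,
        show φ t - ((b:ℝ)+1) * (t ^ (b+1) * ∫ s in Set.Ioi t, φ s / s ^ (b+2))
          = t ^ (b+1) * (φ t / t ^ (b+1) - ((b:ℝ)+1) * ∫ s in Set.Ioi t, φ s / s ^ (b+2))
          from by field_simp; try ring
        ,
        abs_mul, abs_of_pos hp]
    rw [h1]
    apply le_trans (abs_sub _ _)
    have h2 : |((b:ℝ)+1) * (t ^ (b+1) * ∫ s in Set.Ioi t, φ s / s ^ (b+2))| ≤ Sφ := by
      rw [abs_mul, abs_mul, abs_of_pos hp,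
        abs_of_pos (show (0:ℝ) < (b:ℝ)+1 by positivity)]
      calc ((b:ℝ)+1) * (t ^ (b+1) * |∫ s in Set.Ioi t, φ s / s ^ (b+2)|)
          ≤ ((b:ℝ)+1) * (t ^ (b+1) * (Sφ * ((t ^ (b+1))⁻¹ / ((b:ℝ)+1)))) := by
            apply mul_le_mul_of_nonneg_left
              (mul_le_mul_of_nonneg_left (hGb t ht) hp.le) (by positivity)
        _ = Sφ := by field_simp
    linarith [hS t ht.le]
  have hterm2 : ∀ t : ℝ, 0 < t →
      |∫ r in Set.Ioi t, RaInv (b+1) φ r * r ^ (b+1-1)| ≤ Sφ := by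
    intro t ht
    have hp : (0:ℝ) < t ^ (b+1) := pow_pos ht _
    rw [show (b+1-1:ℕ) = b from rfl, helper_integral_RaInv b hR hφ ht,
      abs_mul, abs_of_pos hp]
    calc t ^ (b+1) * |∫ s in Set.Ioi t, φ s / s ^ (b+2)|
        ≤ t ^ (b+1) * (Sφ * ((t ^ (b+1))⁻¹ / ((b:ℝ)+1))) :=
          mul_le_mul_of_nonneg_left (hGb t ht) hp.le
      _ = Sφ / ((b:ℝ)+1) := by field_simp
      _ ≤ Sφ := div_le_self hS0 (by simp)
  have hA : sSup ((fun t : ℝ => t ^ (b+1) * |RaInv (b+1) φ t|) '' Set.Ioi 0) ≤ 2 * Sφ := by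
    apply csSup_le ((Set.nonempty_Ioi).image _)
    rintro y ⟨t, ht, rfl⟩
    exact hterm1 t ht
  have hB : sSup ((fun t : ℝ => |∫ r in Set.Ioi t, RaInv (b+1) φ r * r ^ (b+1-1)|)
      '' Set.Ioi 0) ≤ Sφ := by
    apply csSup_le ((Set.nonempty_Ioi).image _)
    rintro y ⟨t, ht, rfl⟩
    exact hterm2 t ht
  rw [DNorm]
  linarith


/-- `R^a : D^a_R → C_{c,R}([0,∞))` extends continuously to `t = 0`
(with value `a·lim_{t→0⁺} ∫_t^∞ ζ(r) r^{a-1} dr`), is a linear bijection with the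
explicit inverse `RaInv`, and both maps are continuous for the respective norms. -/
theorem stmt5 (a : ℕ) (ha : 1 ≤ a) (R : ℝ) (hR : 0 < R) :
    -- the continuous extension to [0,∞), supported in [0,R]
    (∀ ζ : ℝ → ℝ, MemD a R ζ → ∃ φ : ℝ → ℝ, MemCc R φ ∧
      (∀ t : ℝ, 0 < t → φ t = Ra a ζ t) ∧
      (∀ L : ℝ, Tendsto (fun t : ℝ => ∫ r in Set.Ioi t, ζ r * r ^ (a - 1))
          (nhdsWithin 0 (Set.Ioi 0)) (𝓝 L) → φ 0 = a * L)) ∧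
    -- linearity
    (∀ ζ₁ ζ₂ : ℝ → ℝ, MemD a R ζ₁ → MemD a R ζ₂ → ∀ t : ℝ, 0 < t →
      Ra a (fun s => ζ₁ s + ζ₂ s) t = Ra a ζ₁ t + Ra a ζ₂ t) ∧
    (∀ ζ : ℝ → ℝ, MemD a R ζ → ∀ c : ℝ, ∀ t : ℝ, 0 < t →
      Ra a (fun s => c * ζ s) t = c * Ra a ζ t) ∧
    -- injectivity on D^a_R
    (∀ ζ₁ ζ₂ : ℝ → ℝ, MemD a R ζ₁ → MemD a R ζ₂ →
      (∀ t : ℝ, 0 < t → Ra a ζ₁ t = Ra a ζ₂ t) → ζ₁ = ζ₂) ∧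
    -- surjectivity, with the explicit inverse
    (∀ φ : ℝ → ℝ, MemCc R φ → MemD a R (RaInv a φ) ∧
      ∀ t : ℝ, 0 < t → Ra a (RaInv a φ) t = φ t) ∧
    -- continuity of R^a
    (∃ c₁ : ℝ, 0 < c₁ ∧ ∀ ζ : ℝ → ℝ, MemD a R ζ → ∀ t : ℝ, 0 < t →
      |Ra a ζ t| ≤ c₁ * DNorm a ζ) ∧
    -- continuity of the inverse
    (∃ c₂ : ℝ, 0 < c₂ ∧ ∀ φ : ℝ → ℝ, MemCc R φ →
      DNorm a (RaInv a φ) ≤ c₂ * sSup ((fun t : ℝ => |φ t|) '' Set.Ici 0)) := by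
  obtain ⟨b, rfl⟩ : ∃ b : ℕ, a = b + 1 := ⟨a - 1, (Nat.succ_pred_eq_of_pos ha).symm⟩
  refine ⟨?_, ?_, ?_, ?_, ?_, ?_, ?_⟩
  · exact fun ζ hζ => helper_extension b hR hζ
  · exact fun ζ₁ ζ₂ h1 h2 t ht => helper_add b h1 h2 ht
  · exact fun ζ hζ c t ht => helper_smul b c ht
  · exact fun ζ₁ ζ₂ h1 h2 h => helper_inj b hR h1 h2 h
  · exact fun φ hφ => ⟨helper_memD b hR hφ, fun t ht => helper_Ra_RaInv b hR hφ ht⟩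
  · exact ⟨((b:ℝ)+1), by positivity, fun ζ hζ t ht => helper_c1 b hR hζ ht⟩
  · exact ⟨3, by norm_num, fun φ hφ => helper_c2 b hR hφ⟩
end
end

section
/- Let k ≥ 1 be an integer, a ≥ k a real number, t ≥ 0, and ζ a continuous function on [0,∞) with compact support. Then lim_{ε→0+} ∫_0^∞ ζ(r) r^a (h_ε′(r²))^k dr = 2^{−k} ∫_t^∞ ζ(r) r^{a−k} dr. -/
/-!
Statement 10: `lim_{ε→0⁺} ∫_0^∞ ζ(r) r^a (h_ε'(r²))^k dr = 2^{-k} ∫_t^∞ ζ(r) r^{a-k} dr`.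
-/

noncomputable section

open Filter Topology MeasureTheory

/-- The smooth approximation
`h_ε(s) = (1/2)[√((√(s+ε²) − t)² + ε²) + √(s+ε²) − t]`. -/
def heps (t ε : ℝ) : ℝ → ℝ := fun s =>
  (1 / 2) * (Real.sqrt ((Real.sqrt (s + ε ^ 2) - t) ^ 2 + ε ^ 2) + Real.sqrt (s + ε ^ 2) - t)

/-- Explicit formula for the derivative of `heps`. -/
def phi (t ε : ℝ) (s : ℝ) : ℝ :=
  (1 + (Real.sqrt (s + ε ^ 2) - t) / Real.sqrt ((Real.sqrt (s + ε ^ 2) - t) ^ 2 + ε ^ 2))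
    / (4 * Real.sqrt (s + ε ^ 2))

lemma hasDerivAt_heps (t ε : ℝ) (hε : ε ≠ 0) (s : ℝ) (hs : 0 ≤ s) :
    HasDerivAt (heps t ε) (phi t ε s) s := by
  have hεs : 0 < s + ε ^ 2 := by positivity
  have hu0 : 0 < Real.sqrt (s + ε ^ 2) := Real.sqrt_pos.2 hεs
  have hu : HasDerivAt (fun x : ℝ => Real.sqrt (x + ε ^ 2))
      (1 / (2 * Real.sqrt (s + ε ^ 2))) s := by
    simpa using (((hasDerivAt_id s).add_const (ε ^ 2)).sqrt hεs.ne')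
  have hW0 : 0 < (Real.sqrt (s + ε ^ 2) - t) ^ 2 + ε ^ 2 := by positivity
  have hW : 0 < Real.sqrt ((Real.sqrt (s + ε ^ 2) - t) ^ 2 + ε ^ 2) := Real.sqrt_pos.2 hW0
  have hv : HasDerivAt (fun x : ℝ => (Real.sqrt (x + ε ^ 2) - t) ^ 2 + ε ^ 2)
      (2 * (Real.sqrt (s + ε ^ 2) - t) * (1 / (2 * Real.sqrt (s + ε ^ 2)))) s := by
    simpa [mul_comm, mul_assoc, mul_left_comm] using (((hu.sub_const t).pow 2).add_const (ε ^ 2))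
  have hw := hv.sqrt hW0.ne'
  have h := (((hw.add hu).sub_const t).const_mul (1 / 2 : ℝ))
  refine HasDerivAt.congr_deriv h ?_
  unfold phi
  field_simp
  ring

lemma ratio_abs_le (t ε : ℝ) (hε : ε ≠ 0) (s : ℝ) :
    |(Real.sqrt (s + ε ^ 2) - t) / Real.sqrt ((Real.sqrt (s + ε ^ 2) - t) ^ 2 + ε ^ 2)| ≤ 1 := by
  set u := Real.sqrt (s + ε ^ 2)
  have hW0 : 0 < (u - t) ^ 2 + ε ^ 2 := by positivity
  have hW : 0 < Real.sqrt ((u - t) ^ 2 + ε ^ 2) := Real.sqrt_pos.2 hW0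
  rw [abs_div, abs_of_pos hW, div_le_one hW]
  calc |u - t| = Real.sqrt ((u - t) ^ 2) := (Real.sqrt_sq_eq_abs _).symm
    _ ≤ Real.sqrt ((u - t) ^ 2 + ε ^ 2) := Real.sqrt_le_sqrt (by nlinarith [sq_nonneg ε])

lemma phi_nonneg (t ε : ℝ) (hε : ε ≠ 0) (s : ℝ) (hs : 0 ≤ s) : 0 ≤ phi t ε s := by
  have h := ratio_abs_le t ε hε s
  have hu0 : 0 < Real.sqrt (s + ε ^ 2) := Real.sqrt_pos.2 (by positivity)
  apply div_nonneg _ (by positivity)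
  nlinarith [abs_le.1 h]

lemma phi_le (t ε : ℝ) (hε : ε ≠ 0) (r : ℝ) (hr : 0 < r) :
    phi t ε (r ^ 2) ≤ 1 / (2 * r) := by
  have h := (abs_le.1 (ratio_abs_le t ε hε (r ^ 2))).2
  have hu0 : 0 < Real.sqrt (r ^ 2 + ε ^ 2) := Real.sqrt_pos.2 (by positivity)
  have hru : r ≤ Real.sqrt (r ^ 2 + ε ^ 2) := by
    calc r = Real.sqrt (r ^ 2) := (Real.sqrt_sq hr.le).symm
      _ ≤ _ := Real.sqrt_le_sqrt (by nlinarith [sq_nonneg ε])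
  have h2 : phi t ε (r ^ 2) ≤ 2 / (4 * r) :=
    div_le_div₀ (by norm_num) (by linarith) (by linarith) (by linarith)
  calc phi t ε (r ^ 2) ≤ 2 / (4 * r) := h2
    _ = 1 / (2 * r) := by ring

lemma continuous_phi_sq (t ε : ℝ) (hε : ε ≠ 0) :
    Continuous (fun r : ℝ => phi t ε (r ^ 2)) := by
  have h1 : Continuous (fun r : ℝ => Real.sqrt (r ^ 2 + ε ^ 2)) :=
    Real.continuous_sqrt.comp ((continuous_pow 2).add continuous_const)
  have h2 : Continuous (fun r : ℝ => Real.sqrt ((Real.sqrt (r ^ 2 + ε ^ 2) - t) ^ 2 + ε ^ 2)) :=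
    Real.continuous_sqrt.comp (((h1.sub continuous_const).pow 2).add continuous_const)
  have hW : ∀ r : ℝ, Real.sqrt ((Real.sqrt (r ^ 2 + ε ^ 2) - t) ^ 2 + ε ^ 2) ≠ 0 :=
    fun r => (Real.sqrt_pos.2 (by positivity)).ne'
  have hu : ∀ r : ℝ, (4 : ℝ) * Real.sqrt (r ^ 2 + ε ^ 2) ≠ 0 :=
    fun r => by
      have : 0 < Real.sqrt (r ^ 2 + ε ^ 2) := Real.sqrt_pos.2 (by positivity); positivity
  exact ((continuous_const.add ((h1.sub continuous_const).div h2 hW)).div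
    (continuous_const.mul h1) hu)

lemma tendsto_phi (t : ℝ) (r : ℝ) (hr : 0 < r) (hrt : r ≠ t) :
    Filter.Tendsto (fun ε : ℝ => phi t ε (r ^ 2)) (nhdsWithin 0 (Set.Ioi 0))
      (𝓝 (if t < r then 1 / (2 * r) else 0)) := by
  have hA : Tendsto (fun ε : ℝ => Real.sqrt (r ^ 2 + ε ^ 2)) (𝓝 0) (𝓝 r) := by
    have hc : Continuous (fun ε : ℝ => Real.sqrt (r ^ 2 + ε ^ 2)) :=
      Real.continuous_sqrt.comp (continuous_const.add (continuous_pow 2))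
    have := hc.tendsto 0
    simpa [Real.sqrt_sq hr.le] using this
  have hB : Tendsto (fun ε : ℝ => Real.sqrt (r ^ 2 + ε ^ 2) - t) (𝓝 0) (𝓝 (r - t)) :=
    hA.sub tendsto_const_nhds
  have hsq : Tendsto (fun ε : ℝ => ε ^ 2) (𝓝 (0:ℝ)) (𝓝 0) := by
    simpa using ((continuous_pow 2).tendsto (0:ℝ))
  have hC : Tendsto (fun ε : ℝ => Real.sqrt ((Real.sqrt (r ^ 2 + ε ^ 2) - t) ^ 2 + ε ^ 2))
      (𝓝 0) (𝓝 |r - t|) := by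
    have h3 : Tendsto (fun ε : ℝ => (Real.sqrt (r ^ 2 + ε ^ 2) - t) ^ 2 + ε ^ 2)
        (𝓝 0) (𝓝 ((r - t) ^ 2)) := by simpa using (hB.pow 2).add hsq
    have := (Real.continuous_sqrt.tendsto _).comp h3
    simpa [Real.sqrt_sq_eq_abs, Function.comp_def] using this
  have habs : |r - t| ≠ 0 := abs_ne_zero.2 (sub_ne_zero.2 hrt)
  have hfull : Tendsto (fun ε : ℝ => phi t ε (r ^ 2)) (𝓝 0)
      (𝓝 ((1 + (r - t) / |r - t|) / (4 * r))) := by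
    unfold phi
    exact (tendsto_const_nhds.add (hB.div hC habs)).div (tendsto_const_nhds.mul hA)
      (by positivity)
  have heq : (1 + (r - t) / |r - t|) / (4 * r) = if t < r then 1 / (2 * r) else 0 := by
    rcases lt_or_gt_of_ne hrt with h | h
    · rw [if_neg (not_lt.2 h.le), abs_of_neg (sub_neg.2 h), div_neg,
        div_self (sub_ne_zero.2 hrt)]
      ring
    · rw [if_pos h, abs_of_pos (sub_pos.2 h), div_self (sub_ne_zero.2 hrt)]
      ring
  exact heq ▸ hfull.mono_left nhdsWithin_le_nhds

/-- For an integer `k ≥ 1`, a real `a ≥ k`, `t ≥ 0` and a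
continuous compactly supported `ζ` on `[0,∞)`,
`∫_0^∞ ζ(r) r^a (h_ε'(r²))^k dr → 2^{-k} ∫_t^∞ ζ(r) r^{a-k} dr` as `ε → 0⁺`. -/
theorem stmt10 (k : ℕ) (hk : 1 ≤ k) (a : ℝ) (ha : (k : ℝ) ≤ a) (t : ℝ) (ht : 0 ≤ t)
    (ζ : ℝ → ℝ) (hcont : ContinuousOn ζ (Set.Ici 0))
    (hsupp : ∃ M : ℝ, ∀ r : ℝ, M < r → ζ r = 0) :
    Tendsto
      (fun ε : ℝ => ∫ r in Set.Ioi (0 : ℝ), ζ r * r ^ a * (deriv (heps t ε) (r ^ 2)) ^ k)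
      (nhdsWithin 0 (Set.Ioi 0))
      (𝓝 (((2 : ℝ) ^ k)⁻¹ * ∫ r in Set.Ioi t, ζ r * r ^ (a - (k : ℝ)))) := by
  obtain ⟨M, hM⟩ := hsupp
  set M' : ℝ := max M 1 with hM'def
  have hM1 : (0 : ℝ) < M' := lt_of_lt_of_le one_pos (le_max_right _ _)
  obtain ⟨C, hC⟩ := (isCompact_Icc (a := (0:ℝ)) (b := M')).exists_bound_of_continuousOn
    (hcont.mono (fun x hx => hx.1))
  have hC0 : 0 ≤ C := le_trans (norm_nonneg _) (hC 0 ⟨le_refl 0, hM1.le⟩)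
  -- the key algebraic identity
  have key : ∀ r : ℝ, 0 < r → r ^ a * (1 / (2 * r)) ^ k
      = r ^ (a - (k : ℝ)) * ((2:ℝ) ^ k)⁻¹ := by
    intro r hr
    rw [Real.rpow_sub hr, Real.rpow_natCast, div_pow, one_pow, mul_pow]
    have h2 : ((2:ℝ) ^ k) ≠ 0 := by positivity
    have hrk : (r : ℝ) ^ k ≠ 0 := pow_ne_zero _ hr.ne'
    field_simp
  -- the limit function
  set G : ℝ → ℝ :=
    Set.indicator (Set.Ioi t) (fun r => ζ r * r ^ a * (1 / (2 * r)) ^ k) with hGdef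
  -- the limit integral identity
  have hint : (∫ r in Set.Ioi (0:ℝ), G r)
      = ((2 : ℝ) ^ k)⁻¹ * ∫ r in Set.Ioi t, ζ r * r ^ (a - (k : ℝ)) := by
    rw [hGdef, integral_indicator measurableSet_Ioi,
      Measure.restrict_restrict measurableSet_Ioi,
      Set.inter_eq_self_of_subset_left (Set.Ioi_subset_Ioi ht)]
    rw [← integral_const_mul]
    refine setIntegral_congr_fun measurableSet_Ioi (fun r hr => ?_)
    have hr0 : 0 < r := lt_of_le_of_lt ht hr
    rw [mul_assoc, key r hr0]
    ring
  rw [← hint]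
  -- bound constant
  set D : ℝ := C * M' ^ (a - (k : ℝ)) * ((2:ℝ) ^ k)⁻¹ with hDdef
  have hD0 : 0 ≤ D := by
    apply mul_nonneg (mul_nonneg hC0 (Real.rpow_nonneg hM1.le _))
    positivity
  have main : Tendsto
      (fun ε : ℝ => ∫ r in Set.Ioi (0 : ℝ), ζ r * r ^ a * (phi t ε (r ^ 2)) ^ k)
      (nhdsWithin 0 (Set.Ioi 0)) (𝓝 (∫ r in Set.Ioi (0:ℝ), G r)) := by
    apply tendsto_integral_filter_of_dominated_convergence
      (Set.indicator (Set.Ioc 0 M') (fun _ => D))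
    · -- measurability
      refine eventually_mem_nhdsWithin.mono (fun ε hε => ?_)
      have hεne : ε ≠ 0 := ne_of_gt hε
      have hcontF : ContinuousOn
          (fun r : ℝ => ζ r * r ^ a * (phi t ε (r ^ 2)) ^ k) (Set.Ioi 0) := by
        refine (((hcont.mono Set.Ioi_subset_Ici_self).mul
          (ContinuousOn.rpow_const continuousOn_id
            (fun x hx => Or.inl (ne_of_gt hx)))).mul
          (((continuous_phi_sq t ε hεne).pow k).continuousOn))
      exact hcontF.aestronglyMeasurable measurableSet_Ioi
    · -- bound
      refine eventually_mem_nhdsWithin.mono (fun ε hε => ?_)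
      have hεne : ε ≠ 0 := ne_of_gt hε
      refine (ae_restrict_iff' measurableSet_Ioi).2 (Filter.Eventually.of_forall
        (fun r hr => ?_))
      by_cases hrM : r ≤ M'
      · rw [Set.indicator_of_mem (Set.mem_Ioc.2 ⟨Set.mem_Ioi.1 hr, hrM⟩)]
        have hphi0 := phi_nonneg t ε hεne (r ^ 2) (sq_nonneg r)
        have hphil := phi_le t ε hεne r hr
        have hra : (0:ℝ) ≤ r ^ a := Real.rpow_nonneg hr.le a
        rw [Real.norm_eq_abs, abs_mul, abs_mul, abs_of_nonneg hra,
          abs_of_nonneg (pow_nonneg hphi0 k)]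
        have hζ : |ζ r| ≤ C := hC r ⟨hr.le, hrM⟩
        calc |ζ r| * r ^ a * phi t ε (r ^ 2) ^ k
            ≤ C * r ^ a * (1 / (2 * r)) ^ k := by
              apply mul_le_mul (mul_le_mul hζ le_rfl hra hC0)
                (pow_le_pow_left₀ hphi0 hphil k) (pow_nonneg hphi0 k) (by positivity)
          _ = C * (r ^ (a - (k : ℝ)) * ((2:ℝ) ^ k)⁻¹) := by rw [mul_assoc, key r hr]
          _ ≤ C * (M' ^ (a - (k : ℝ)) * ((2:ℝ) ^ k)⁻¹) := by
              apply mul_le_mul_of_nonneg_left _ hC0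
              apply mul_le_mul_of_nonneg_right _ (by positivity)
              exact Real.rpow_le_rpow hr.le hrM (by linarith)
          _ = D := by rw [hDdef]; ring
      · have hζ0 : ζ r = 0 := hM r (lt_of_le_of_lt (le_max_left M 1) (not_le.1 hrM))
        rw [Set.indicator_of_notMem (fun hmem => hrM hmem.2)]
        simp [hζ0]
    · -- bound integrable
      rw [integrable_indicator_iff measurableSet_Ioc]
      refine integrableOn_const ?_
      exact measure_Ioc_lt_top.ne
    · -- pointwise limit
      have hae : ∀ᵐ r ∂(volume.restrict (Set.Ioi (0:ℝ))), r ≠ t := by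
        apply ae_restrict_of_ae
        refine ae_iff.2 ?_
        simp only [ne_eq, not_not, Set.setOf_eq_eq_singleton, measure_singleton]
      filter_upwards [hae, ae_restrict_mem measurableSet_Ioi] with r hrt hr
      have hlim := ((tendsto_phi t r hr hrt).pow k).const_mul (ζ r * r ^ a)
      have hGr : G r = (ζ r * r ^ a) * (if t < r then 1 / (2 * r) else 0) ^ k := by
        by_cases htr : t < r
        · rw [hGdef, Set.indicator_of_mem (Set.mem_Ioi.2 htr), if_pos htr]
        · rw [hGdef, Set.indicator_of_notMem (fun h => htr (Set.mem_Ioi.1 h)), if_neg htr,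
            zero_pow (by omega), mul_zero]
      rw [hGr]
      exact hlim
  refine main.congr' (eventually_mem_nhdsWithin.mono (fun ε hε => ?_))
  have hεne : ε ≠ 0 := ne_of_gt hε
  show (∫ r in Set.Ioi (0:ℝ), ζ r * r ^ a * (phi t ε (r ^ 2)) ^ k) = _
  refine setIntegral_congr_fun measurableSet_Ioi (fun r hr => ?_)
  rw [(hasDerivAt_heps t ε hεne (r ^ 2) (sq_nonneg r)).deriv]
end
end

section
/- For every integer a ≥ 1 there exists a continuous function ζ : (0,∞) → ℝ with bounded support such that lim_{t→0+} t^a ζ(t) = 0 and lim_{t→0+} ∫_t^∞ ζ(r) r^{a−1} dr exists in ℝ (i.e. ζ ∈ D^a), but ∫_0^∞ |ζ(r)| r^{a−1} dr = ∞. -/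
/-!
Statement 13: there exists `ζ ∈ D^a` with `∫_0^∞ |ζ(r)| r^{a-1} dr = ∞`.
-/

noncomputable section

open Filter Topology

open Real Set MeasureTheory


noncomputable def Gfun (r : ℝ) : ℝ :=
  -(Real.sin (2 * Real.log (min r 1)) * (1 - Real.log (min r 1))
      + Real.sin (Real.log (min r 1)) ^ 2) / (r * (1 - Real.log (min r 1)) ^ 2)

noncomputable def Ffun (t : ℝ) : ℝ := Real.sin (Real.log t) ^ 2 / (1 - Real.log t)

noncomputable def Wfun (r : ℝ) : ℝ :=
  -(1/2) * Real.log (1 - Real.log r) - Real.sin (4 * Real.log r) / (8 * (1 - Real.log r))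
    - (9/8) * (1 - Real.log r)⁻¹

noncomputable def Pfun (r : ℝ) : ℝ :=
  (4 * (1 - Real.log r) - 4 * Real.cos (4 * Real.log r) * (1 - Real.log r)
      - Real.sin (4 * Real.log r) - 9) / (8 * r * (1 - Real.log r) ^ 2)

lemma one_sub_log_pos {r : ℝ} (h0 : 0 < r) (h1 : r ≤ 1) : 0 < 1 - Real.log r := by
  have := Real.log_nonpos h0.le h1; linarith

lemma Gfun_eq {r : ℝ} (h1 : r ≤ 1) :
    Gfun r = -(Real.sin (2 * Real.log r) * (1 - Real.log r) + Real.sin (Real.log r) ^ 2)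
      / (r * (1 - Real.log r) ^ 2) := by
  simp [Gfun, min_eq_left h1]

lemma Gfun_zero {r : ℝ} (h1 : 1 ≤ r) : Gfun r = 0 := by
  simp [Gfun, min_eq_right h1]

lemma contG : ContinuousOn Gfun (Set.Ioi (0:ℝ)) := by
  have hm : ContinuousOn (fun r : ℝ => Real.log (min r 1)) (Set.Ioi 0) := by
    apply ContinuousOn.log
    · exact (continuous_id.min continuous_const).continuousOn
    · intro x hx; exact ne_of_gt (lt_min hx one_pos)
  apply ContinuousOn.div
  · exact (((Real.continuous_sin.comp_continuousOn (continuousOn_const.mul hm)).mul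
      (continuousOn_const.sub hm)).add
      ((Real.continuous_sin.comp_continuousOn hm).pow 2)).neg
  · exact (continuousOn_id).mul ((continuousOn_const.sub hm).pow 2)
  · intro x hx
    have h0 : (0:ℝ) < x := hx
    have hlog : Real.log (min x 1) ≤ 0 := Real.log_nonpos (lt_min h0 one_pos).le (min_le_right x 1)
    have : 0 < 1 - Real.log (min x 1) := by linarith
    positivity

lemma hasDerivAt_negF {r : ℝ} (h0 : 0 < r) (h1 : r ≤ 1) :
    HasDerivAt (fun x => -Ffun x) (Gfun r) r := by
  have hne : (1 - Real.log r) ≠ 0 := ne_of_gt (one_sub_log_pos h0 h1)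
  have hlog : HasDerivAt Real.log r⁻¹ r := Real.hasDerivAt_log h0.ne'
  have hsin : HasDerivAt (fun x => Real.sin (Real.log x)) (Real.cos (Real.log r) * r⁻¹) r :=
    (Real.hasDerivAt_sin (Real.log r)).comp r hlog
  have hnum : HasDerivAt (fun x => Real.sin (Real.log x) ^ 2)
      ((2:ℕ) * Real.sin (Real.log r) ^ 1 * (Real.cos (Real.log r) * r⁻¹)) r := hsin.pow 2
  have hden : HasDerivAt (fun x => 1 - Real.log x) (0 - r⁻¹) r :=
    (hasDerivAt_const r 1).sub hlog
  have hdiv := (hnum.div hden hne).neg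
  convert hdiv using 1
  · rfl
  · rfl
  · rfl
  rw [Gfun_eq h1, Real.sin_two_mul]
  have hr : r ≠ 0 := h0.ne'
  field_simp
  push_cast; ring

lemma hasDerivAt_W {r : ℝ} (h0 : 0 < r) (h1 : r ≤ 1) :
    HasDerivAt Wfun (Pfun r) r := by
  have hcpos := one_sub_log_pos h0 h1
  have hne : (1 - Real.log r) ≠ 0 := ne_of_gt hcpos
  have hlog : HasDerivAt Real.log r⁻¹ r := Real.hasDerivAt_log h0.ne'
  have hden : HasDerivAt (fun x => 1 - Real.log x) (0 - r⁻¹) r :=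
    (hasDerivAt_const r 1).sub hlog
  have hA : HasDerivAt (fun x => Real.log (1 - Real.log x)) ((0 - r⁻¹) / (1 - Real.log r)) r :=
    hden.log hne
  have h4 : HasDerivAt (fun x => 4 * Real.log x) (4 * r⁻¹) r := hlog.const_mul 4
  have hsin4 : HasDerivAt (fun x => Real.sin (4 * Real.log x))
      (Real.cos (4 * Real.log r) * (4 * r⁻¹)) r :=
    h4.sin
  have hden8 : HasDerivAt (fun x => 8 * (1 - Real.log x)) (8 * (0 - r⁻¹)) r := hden.const_mul 8
  have hne8 : 8 * (1 - Real.log r) ≠ 0 := by positivity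
  have hB := hsin4.div hden8 hne8
  have hC : HasDerivAt (fun x => (1 - Real.log x)⁻¹)
      (-(0 - r⁻¹) / (1 - Real.log r) ^ 2) r := hden.inv hne
  have htot := ((hA.const_mul (-(1/2:ℝ))).sub hB).sub (hC.const_mul (9/8:ℝ))
  convert htot using 1
  · rfl
  · rfl
  · rfl
  unfold Pfun
  have hr : r ≠ 0 := h0.ne'
  field_simp
  ring

lemma P_le_absG {r : ℝ} (h0 : 0 < r) (h1 : r ≤ 1) : Pfun r ≤ |Gfun r| := by
  have hcpos := one_sub_log_pos h0 h1
  set s := Real.log r with hs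
  set c := 1 - s with hc
  have habsG : |Gfun r| = |Real.sin (2*s) * c + Real.sin s ^ 2| / (r * c ^ 2) := by
    rw [Gfun_eq h1, abs_div, abs_neg, abs_of_pos (by positivity : (0:ℝ) < r * c ^ 2)]
  rw [habsG]
  unfold Pfun
  rw [div_le_div_iff₀ (by positivity) (by positivity)]
  set N := Real.sin (2*s) * c + Real.sin s ^ 2 with hN
  have h1N : |Real.sin (2*s) * c| - |(-(Real.sin s ^ 2))| ≤ |N| := by
    have := abs_sub_abs_le_abs_sub (Real.sin (2*s) * c) (-(Real.sin s ^ 2))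
    simpa [hN, sub_neg_eq_add] using this
  have h2N : |Real.sin (2*s) * c| = |Real.sin (2*s)| * c := by
    rw [abs_mul, abs_of_pos hcpos]
  have h3N : |(-(Real.sin s ^ 2))| = Real.sin s ^ 2 := by
    rw [abs_neg, abs_of_nonneg (sq_nonneg _)]
  have hsin2 : Real.sin (2*s) ^ 2 ≤ |Real.sin (2*s)| := by
    have h := abs_nonneg (Real.sin (2*s))
    have h' : |Real.sin (2*s)| ≤ 1 := Real.abs_sin_le_one _
    nlinarith [sq_abs (Real.sin (2*s))]
  have hcos : Real.cos (4*s) = 1 - 2 * Real.sin (2*s) ^ 2 := by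
    rw [show (4:ℝ)*s = 2*(2*s) by ring, Real.cos_two_mul]
    nlinarith [Real.sin_sq_add_cos_sq (2*s)]
  have hss : Real.sin s ^ 2 ≤ 1 := Real.sin_sq_le_one s
  have hsin4 : -1 ≤ Real.sin (4*s) := Real.neg_one_le_sin _
  simp only [← hs, ← hc]
  have key : 4*c - 4*Real.cos (4*s)*c - Real.sin (4*s) - 9 ≤ 8 * |N| := by
    have hc1 : 1 ≤ c := by
      have := Real.log_nonpos h0.le h1; simp [hc, hs]; linarith
    nlinarith [abs_nonneg N, mul_le_mul_of_nonneg_right hsin2 (le_trans zero_le_one hc1)]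
  nlinarith [mul_le_mul_of_nonneg_right key (show (0:ℝ) ≤ r * c^2 by positivity)]

lemma contP {t : ℝ} (h0 : 0 < t) : ContinuousOn Pfun (Set.Icc t 1) := by
  have hsub : Set.Icc t 1 ⊆ {x : ℝ | x ≠ 0} := by
    intro x hx; exact (lt_of_lt_of_le h0 hx.1).ne'
  have hm : ContinuousOn Real.log (Set.Icc t 1) := Real.continuousOn_log.mono hsub
  have l0 : ContinuousOn (fun r : ℝ => 1 - Real.log r) (Set.Icc t 1) := continuousOn_const.sub hm
  have l4 : ContinuousOn (fun r : ℝ => 4 * Real.log r) (Set.Icc t 1) := continuousOn_const.mul hm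
  have l2 : ContinuousOn (fun r : ℝ => Real.cos (4 * Real.log r)) (Set.Icc t 1) :=
    Real.continuous_cos.comp_continuousOn l4
  have l3 : ContinuousOn (fun r : ℝ => Real.sin (4 * Real.log r)) (Set.Icc t 1) :=
    Real.continuous_sin.comp_continuousOn l4
  apply ContinuousOn.div
  · exact (((continuousOn_const.mul l0).sub ((continuousOn_const.mul l2).mul l0)).sub l3).sub continuousOn_const
  · exact (continuousOn_const.mul continuousOn_id).mul (l0.pow 2)
  · intro x hx
    have hxpos : 0 < x := lt_of_lt_of_le h0 hx.1
    have := one_sub_log_pos hxpos hx.2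
    positivity

lemma integrableG {t : ℝ} (h0 : 0 < t) : MeasureTheory.IntegrableOn Gfun (Set.Ioc t 1) := by
  have h : Set.Icc t 1 ⊆ Set.Ioi 0 := fun x hx => lt_of_lt_of_le h0 hx.1
  exact ((contG.mono h).integrableOn_Icc).mono_set Set.Ioc_subset_Icc_self

lemma Ffun_one : Ffun 1 = 0 := by simp [Ffun]

lemma tail_integral {t : ℝ} (h0 : 0 < t) (h1 : t ≤ 1) :
    ∫ r in Set.Ioi t, Gfun r = Ffun t := by
  have hGzero : Set.EqOn Gfun 0 (Set.Ioi 1) := fun x hx => Gfun_zero (le_of_lt hx)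
  have hint1 : MeasureTheory.IntegrableOn Gfun (Set.Ioi 1) := by
    apply (MeasureTheory.integrableOn_congr_fun hGzero measurableSet_Ioi).2
    exact MeasureTheory.integrableOn_zero
  rw [← Set.Ioc_union_Ioi_eq_Ioi h1,
    MeasureTheory.setIntegral_union (Set.Ioc_disjoint_Ioi le_rfl) measurableSet_Ioi
      (integrableG h0) hint1]
  have h2 : ∫ r in Set.Ioi (1:ℝ), Gfun r = 0 := by
    rw [MeasureTheory.setIntegral_congr_fun measurableSet_Ioi hGzero]; simp
  have h3 : ∫ r in Set.Ioc t 1, Gfun r = Ffun t := by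
    rw [← intervalIntegral.integral_of_le h1]
    rw [intervalIntegral.integral_eq_sub_of_hasDerivAt
      (f := fun x => -Ffun x) (f' := Gfun) ?_ ?_]
    · rw [Ffun_one]; ring
    · intro x hx
      rw [Set.uIcc_of_le h1] at hx
      exact hasDerivAt_negF (lt_of_lt_of_le h0 hx.1) hx.2
    · exact (intervalIntegrable_iff_integrableOn_Ioc_of_le h1).2 (integrableG h0)
  rw [h2, h3]; ring

lemma W_integral {t : ℝ} (h0 : 0 < t) (h1 : t ≤ 1) :
    ∫ r in Set.Ioc t 1, Pfun r = Wfun 1 - Wfun t := by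
  have hPint : MeasureTheory.IntegrableOn Pfun (Set.Ioc t 1) :=
    ((contP h0).integrableOn_Icc).mono_set Set.Ioc_subset_Icc_self
  rw [← intervalIntegral.integral_of_le h1]
  rw [intervalIntegral.integral_eq_sub_of_hasDerivAt (f := Wfun) (f' := Pfun) ?_ ?_]
  · intro x hx
    rw [Set.uIcc_of_le h1] at hx
    exact hasDerivAt_W (lt_of_lt_of_le h0 hx.1) hx.2
  · exact (intervalIntegrable_iff_integrableOn_Ioc_of_le h1).2 hPint

lemma Wfun_one : Wfun 1 = -(9/8) := by
  simp [Wfun]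

lemma W_lower {t : ℝ} (h0 : 0 < t) (h1 : t ≤ 1) :
    (1/2) * Real.log (1 - Real.log t) - 5/4 ≤ Wfun 1 - Wfun t := by
  rw [Wfun_one]
  unfold Wfun
  have hc : (1:ℝ) ≤ 1 - Real.log t := by
    have := Real.log_nonpos h0.le h1; linarith
  have hcpos : (0:ℝ) < 1 - Real.log t := by linarith
  have hsin : -1 ≤ Real.sin (4 * Real.log t) := Real.neg_one_le_sin _
  have h8c : (8:ℝ) ≤ 8 * (1 - Real.log t) := by linarith
  have hA : -(1/8 : ℝ) ≤ Real.sin (4 * Real.log t) / (8 * (1 - Real.log t)) := by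
    rw [le_div_iff₀ (by linarith)]
    nlinarith
  have hB : (0:ℝ) < (1 - Real.log t)⁻¹ := by positivity
  nlinarith

lemma tendsto_inv_one_sub_log :
    Tendsto (fun t : ℝ => (1 - Real.log t)⁻¹) (𝓝[>] (0:ℝ)) (𝓝 0) := by
  have h : Tendsto (fun t : ℝ => 1 - Real.log t) (𝓝[>] (0:ℝ)) atTop := by
    have h2 : Tendsto (fun t : ℝ => -Real.log t) (𝓝[>] (0:ℝ)) atTop :=
      tendsto_neg_atBot_atTop.comp Real.tendsto_log_nhdsGT_zero
    simpa [sub_eq_add_neg] using tendsto_atTop_add_const_left _ (1:ℝ) h2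
  exact h.inv_tendsto_atTop

lemma tendsto_F : Tendsto Ffun (𝓝[>] (0:ℝ)) (𝓝 0) := by
  apply squeeze_zero_norm' ?_ tendsto_inv_one_sub_log
  filter_upwards [Ioo_mem_nhdsGT_of_mem (Set.left_mem_Ico.2 one_pos)] with t ht
  have hc := one_sub_log_pos ht.1 ht.2.le
  have hF : (0:ℝ) ≤ Ffun t := by unfold Ffun; positivity
  rw [Real.norm_eq_abs, abs_of_nonneg hF]
  unfold Ffun
  rw [inv_eq_one_div, div_le_div_iff₀ (by positivity) (by positivity)]
  nlinarith [Real.sin_sq_le_one (Real.log t)]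

lemma lintegral_ge (n : ℕ) :
    (n : ENNReal) ≤ ∫⁻ r in Set.Ioi (0:ℝ), ENNReal.ofReal |Gfun r| := by
  set t := Real.exp (1 - Real.exp (2*n+3)) with htdef
  have ht0 : 0 < t := Real.exp_pos _
  have hexp1 : (1:ℝ) < Real.exp (2*n+3) := by
    rw [← Real.exp_zero]; exact Real.exp_lt_exp.2 (by positivity)
  have ht1 : t ≤ 1 := by
    have h : t ≤ Real.exp 0 := Real.exp_le_exp.2 (by linarith)
    simpa using h
  have hlt : Real.log t = 1 - Real.exp (2*n+3) := Real.log_exp _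
  have hP : MeasureTheory.IntegrableOn Pfun (Set.Ioc t 1) :=
    ((contP ht0).integrableOn_Icc).mono_set Set.Ioc_subset_Icc_self
  have habs : MeasureTheory.IntegrableOn (fun r => |Gfun r|) (Set.Ioc t 1) :=
    (integrableG ht0).abs
  have hmono : ∫ r in Set.Ioc t 1, Pfun r ≤ ∫ r in Set.Ioc t 1, |Gfun r| :=
    MeasureTheory.setIntegral_mono_on hP habs measurableSet_Ioc
      (fun x hx => P_le_absG (lt_trans ht0 hx.1) hx.2)
  have hW : (n : ℝ) ≤ Wfun 1 - Wfun t := by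
    have := W_lower ht0 ht1
    rw [hlt] at this
    have hlog2 : Real.log (1 - (1 - Real.exp (2*↑n+3))) = 2*n+3 := by
      rw [show (1 - (1 - Real.exp (2*(n:ℝ)+3))) = Real.exp (2*n+3) by ring, Real.log_exp]
    rw [hlog2] at this
    linarith
  have hchain : (n : ℝ) ≤ ∫ r in Set.Ioc t 1, |Gfun r| := by
    rw [← W_integral ht0 ht1] at hW; linarith
  calc (n : ENNReal) = ENNReal.ofReal (n : ℝ) := (ENNReal.ofReal_natCast n).symm
    _ ≤ ENNReal.ofReal (∫ r in Set.Ioc t 1, |Gfun r|) := ENNReal.ofReal_le_ofReal hchain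
    _ = ∫⁻ r in Set.Ioc t 1, ENNReal.ofReal |Gfun r| :=
        MeasureTheory.ofReal_integral_eq_lintegral_ofReal habs
          (Filter.Eventually.of_forall fun x => abs_nonneg _)
    _ ≤ ∫⁻ r in Set.Ioi (0:ℝ), ENNReal.ofReal |Gfun r| :=
        MeasureTheory.lintegral_mono_set (fun x hx => lt_trans ht0 hx.1)

lemma lintegral_top : ∫⁻ r in Set.Ioi (0:ℝ), ENNReal.ofReal |Gfun r| = ⊤ := by
  rw [eq_top_iff, ← ENNReal.iSup_natCast]
  exact iSup_le lintegral_ge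
/-- For every integer `a ≥ 1` there is a continuous function `ζ`
on `(0,∞)` with bounded support such that `t^a ζ(t) → 0` as `t → 0⁺` and
`∫_t^∞ ζ(r) r^{a-1} dr` converges as `t → 0⁺` (i.e. `ζ ∈ D^a`), while
`∫_0^∞ |ζ(r)| r^{a-1} dr = ∞`. -/
theorem stmt13 (a : ℕ) (ha : 1 ≤ a) :
    ∃ ζ : ℝ → ℝ,
      ContinuousOn ζ (Set.Ioi 0) ∧ (∀ t ≤ (0 : ℝ), ζ t = 0) ∧
      (∃ M : ℝ, ∀ t : ℝ, M < t → ζ t = 0) ∧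
      Tendsto (fun t : ℝ => t ^ a * ζ t) (nhdsWithin 0 (Set.Ioi 0)) (𝓝 0) ∧
      (∃ L : ℝ, Tendsto (fun t : ℝ => ∫ r in Set.Ioi t, ζ r * r ^ (a - 1))
        (nhdsWithin 0 (Set.Ioi 0)) (𝓝 L)) ∧
      ∫⁻ r in Set.Ioi (0 : ℝ), ENNReal.ofReal (|ζ r| * r ^ (a - 1)) = ⊤ := by
  refine ⟨fun r => if 0 < r then Gfun r / r ^ (a-1) else 0, ?_, ?_, ?_, ?_, ?_, ?_⟩
  · -- continuity
    have hc : ContinuousOn (fun r : ℝ => Gfun r / r ^ (a-1)) (Set.Ioi 0) :=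
      contG.div (continuousOn_id.pow _) (fun x hx => pow_ne_zero _ (ne_of_gt hx))
    exact hc.congr (fun x hx => if_pos hx)
  · intro t ht
    exact if_neg (not_lt.2 ht)
  · refine ⟨1, fun t ht => ?_⟩
    show (if 0 < t then Gfun t / t ^ (a-1) else 0) = 0
    rw [if_pos (lt_trans one_pos ht), Gfun_zero ht.le, zero_div]
  · -- t^a ζ t → 0
    apply Tendsto.congr' ?_ ?_ (f₁ := fun t : ℝ => t * Gfun t)
    · filter_upwards [Ioo_mem_nhdsGT_of_mem (Set.left_mem_Ico.2 one_pos)] with t ht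
      have ht0 : (0:ℝ) < t := ht.1
      rw [if_pos ht0]
      have hpow : t ^ a = t ^ (a-1) * t := by
        rw [← pow_succ]; congr 1; omega
      rw [hpow]
      have : t ^ (a-1) ≠ 0 := pow_ne_zero _ ht0.ne'
      field_simp
    · apply squeeze_zero_norm' ?_ ?_ (a := fun t : ℝ => 2 * (1 - Real.log t)⁻¹)
      · filter_upwards [Ioo_mem_nhdsGT_of_mem (Set.left_mem_Ico.2 one_pos)] with t ht
        have ht0 : (0:ℝ) < t := ht.1
        have hc := one_sub_log_pos ht0 ht.2.le
        have heq : t * Gfun t = -(Real.sin (2 * Real.log t) * (1 - Real.log t)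
            + Real.sin (Real.log t) ^ 2) / ((1 - Real.log t) ^ 2) := by
          rw [Gfun_eq ht.2.le]
          field_simp
        rw [Real.norm_eq_abs, heq, abs_div, abs_neg,
          abs_of_pos (show (0:ℝ) < (1 - Real.log t)^2 by positivity)]
        rw [div_le_iff₀ (by positivity)]
        have h1 : |Real.sin (2 * Real.log t) * (1 - Real.log t) + Real.sin (Real.log t) ^ 2|
            ≤ |Real.sin (2 * Real.log t)| * (1 - Real.log t) + Real.sin (Real.log t) ^ 2 := by
          calc _ ≤ |Real.sin (2 * Real.log t) * (1 - Real.log t)| + |Real.sin (Real.log t) ^ 2| :=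
                abs_add_le _ _
            _ = _ := by rw [abs_mul, abs_of_pos hc, abs_pow, sq_abs]
        have h2 : |Real.sin (2 * Real.log t)| ≤ 1 := Real.abs_sin_le_one _
        have h3 : Real.sin (Real.log t) ^ 2 ≤ 1 := Real.sin_sq_le_one _
        have h4 : (1:ℝ) ≤ 1 - Real.log t := by
          have := Real.log_nonpos ht0.le ht.2.le; linarith
        have h5 : 2 * (1 - Real.log t)⁻¹ * (1 - Real.log t) ^ 2 = 2 * (1 - Real.log t) := by
          field_simp
        rw [h5]
        nlinarith
      · have := tendsto_inv_one_sub_log.const_mul (2:ℝ)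
        simpa using this
  · -- tail integral converges to 0
    refine ⟨0, ?_⟩
    apply Tendsto.congr' ?_ tendsto_F
    filter_upwards [Ioo_mem_nhdsGT_of_mem (Set.left_mem_Ico.2 one_pos)] with t ht
    rw [← tail_integral ht.1 ht.2.le]
    apply MeasureTheory.setIntegral_congr_fun measurableSet_Ioi
    intro r hr
    have hr0 : (0:ℝ) < r := lt_trans ht.1 hr
    simp only [if_pos hr0]
    rw [div_mul_cancel₀ _ (pow_ne_zero _ hr0.ne')]
  · -- divergence
    rw [← lintegral_top]
    apply MeasureTheory.setLIntegral_congr_fun measurableSet_Ioi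
    intro r hr
    have hr0 : (0:ℝ) < r := hr
    show ENNReal.ofReal (|if 0 < r then Gfun r / r ^ (a-1) else 0| * r ^ (a-1))
      = ENNReal.ofReal |Gfun r|
    congr 1
    rw [if_pos hr0]
    rw [show |Gfun r / r ^ (a-1)| * r ^ (a-1) = |Gfun r / r ^ (a-1) * r ^ (a-1)| by
      rw [abs_mul, abs_of_nonneg (pow_nonneg hr0.le _)]]
    rw [div_mul_cancel₀ _ (pow_ne_zero _ hr0.ne')]
end
end
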